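/- arXiv:2211.02993 — 6 statements merged into one kernel-verified Lean document; each statement's English description precedes it below -/
import Mathlib

section
/- Pieri property of reverse insertion: let Ψ(P, (r₁,c₁), α) = (P', m) and Ψ(P', (r₂,c₂), α') = (P'', m'), where (r₂,c₂) is a removable corner of P' with c₂ < c₁. Then m' > m. -/
/-- Elementary 0-Hecke relations on words. -/
inductive HeckeRel : List ℕ → List ℕ → Prop
  | idem (i : ℕ) : HeckeRel [i, i] [i]
  | braid (i : ℕ) : HeckeRel [i, i+1, i] [i+1, i, i+1]
  | comm (i j : ℕ) (h : i + 2 ≤ j ∨ j + 2 ≤ i) : HeckeRel [i, j] [j, i]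

/-- Hecke equivalence: the congruence on words generated by the 0-Hecke relations. -/
inductive HeckeEquiv : List ℕ → List ℕ → Prop
  | of {a b : List ℕ} : HeckeRel a b → HeckeEquiv a b
  | refl (a : List ℕ) : HeckeEquiv a a
  | symm {a b : List ℕ} : HeckeEquiv a b → HeckeEquiv b a
  | trans {a b c : List ℕ} : HeckeEquiv a b → HeckeEquiv b c → HeckeEquiv a c
  | append_congr {a b c d : List ℕ} :
      HeckeEquiv a b → HeckeEquiv c d → HeckeEquiv (a ++ c) (b ++ d)

/-- The permutation of `ℕ` associated to a word (letter `i` ↦ the simple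
transposition swapping `i` and `i+1`). -/
def wordPerm (a : List ℕ) : Equiv.Perm ℕ := (a.map fun i => Equiv.swap i (i + 1)).prod

/-- A word on the alphabet of positive integers. -/
def IsPosWord (a : List ℕ) : Prop := ∀ x ∈ a, 0 < x

/-- `a` is a reduced word of the permutation `w`: it represents `w` and has
minimum length among words representing `w`. -/
def IsReducedWordOf (w : Equiv.Perm ℕ) (a : List ℕ) : Prop :=
  IsPosWord a ∧ wordPerm a = w ∧
    ∀ b : List ℕ, IsPosWord b → wordPerm b = w → a.length ≤ b.length

/-- `a` is a Hecke word for `w`: it is Hecke-equivalent to a reduced word of `w`. -/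
def IsHeckeWord (w : Equiv.Perm ℕ) (a : List ℕ) : Prop :=
  IsPosWord a ∧ ∃ b, IsReducedWordOf w b ∧ HeckeEquiv a b

/-- A word is reduced if it has minimum length in its Hecke-equivalence class. -/
def IsReducedWord (a : List ℕ) : Prop := ∀ b, HeckeEquiv a b → a.length ≤ b.length

/-- The `i`-th row (1-indexed) of a tableau presented as a list of rows. -/
def RowOf (T : List (List ℕ)) (i : ℕ) : List ℕ := T.getD (i - 1) []

/-- A decreasing tableau: nonempty rows of positive integers of weakly decreasing
lengths, strictly decreasing along rows and down columns. -/
def IsDecreasingTableau (T : List (List ℕ)) : Prop :=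
  (∀ R ∈ T, R ≠ []) ∧
  (∀ R ∈ T, ∀ x ∈ R, 0 < x) ∧
  (∀ R ∈ T, R.Chain' (fun x y => y < x)) ∧
  T.Chain' (fun R S => S.length ≤ R.length ∧ ∀ j < S.length, S.getD j 0 < R.getD j 0)

/-- The shape of a tableau: the list of its row lengths. -/
def shape (T : List (List ℕ)) : List ℕ := T.map List.length

/-- `(r,c)` (1-indexed, matrix style) is a removable cell of `T`: the cell at the
end of row `r` and at the bottom of column `c`. -/
def IsRemovable (T : List (List ℕ)) (r c : ℕ) : Prop :=
  1 ≤ r ∧ r ≤ T.length ∧ 1 ≤ c ∧ (RowOf T r).length = c ∧ (RowOf T (r + 1)).length < c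

/-- Ejectability (recursive): `x` is ejectable in `T` if `x` is in the first row of
`T` and either `x-1` is not in the first row, or it is and `x-1` is ejectable in
the tableau with the first row removed. -/
def Ejectable : List (List ℕ) → ℕ → Prop
  | [], _ => False
  | R :: rest, x => x ∈ R ∧ (x - 1 ∉ R ∨ Ejectable rest (x - 1))

/-- Boolean version of ejectability, used inside the algorithms. -/
def ejectableB : List (List ℕ) → ℕ → Bool
  | [], _ => false
  | R :: rest, x => R.contains x && (!(R.contains (x - 1)) || ejectableB rest (x - 1))

/-- Smallest ejectable value `x` in `T` with `lo < x < hi`, if any. -/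
def smallestEjectableBetween (T : List (List ℕ)) (lo hi : ℕ) : Option ℕ :=
  ((T.headD []).filter fun x => ejectableB T x && decide (lo < x) && decide (x < hi)).min?

/-- Largest ejectable value `x` in `T` with `lo < x < hi`, if any. -/
def largestEjectableBetween (T : List (List ℕ)) (lo hi : ℕ) : Option ℕ :=
  ((T.headD []).filter fun x => ejectableB T x && decide (lo < x) && decide (x < hi)).max?

/-- Replace all occurrences of `old` by `new` in a row. -/
def replaceVal (R : List ℕ) (old new : ℕ) : List ℕ :=
  R.map fun y => if y = old then new else y

/-- One step of the reverse insertion Ψ at a row `R`, given the already-processed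
lower tableau `B = P'_{>i}`, the value `m1 = m_{i+1}` and flag `a1 = α_{i+1}`.
Returns the new row, the value `m_i` and the flag `α_i`. -/
def psiRowStep (R : List ℕ) (B : List (List ℕ)) (m1 : ℕ) (a1 : Bool) :
    List ℕ × ℕ × Bool :=
  let mi := ((R.filter fun y => decide (m1 < y)).min?).getD 0
  if R.contains (mi - 1) then (R, mi, a1)                        -- Dummy
  else if a1 && !(R.contains m1) then (replaceVal R mi m1, mi, true)  -- Direct Repl.
  else
    match smallestEjectableBetween B m1 mi with
    | some x => (replaceVal R mi x, mi, true)                    -- Indirect Repl.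
    | none => (R, mi, false)                                     -- No Replacement

/-- Process a list of rows (top part of the tableau) from bottom to top, on top of
the already-processed lower tableau `B`, with initial ejected value `m` and flag `a`.
Returns the full processed tableau together with the last ejected value and flag. -/
def psiRows : List (List ℕ) → List (List ℕ) → ℕ → Bool → List (List ℕ) × ℕ × Bool
  | [], B, m, a => (B, m, a)
  | R :: rest, B, m, a =>
    let s := psiRows rest B m a
    let t := psiRowStep R s.1 s.2.1 s.2.2
    (t.1 :: s.1, t.2.1, t.2.2)

/-- The part of the tableau below the processed rows, after the initialization step
of Ψ (for `α = 1` the removable cell at the end of row `r` is deleted). -/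
def psiBase (P : List (List ℕ)) (r : ℕ) (α : Bool) : List (List ℕ) :=
  if α then
    (if (RowOf P r).dropLast = [] then P.drop r else (RowOf P r).dropLast :: P.drop r)
  else P.drop r

/-- The rows of `P` to be processed by Ψ. -/
def psiUpper (P : List (List ℕ)) (r : ℕ) (α : Bool) : List (List ℕ) :=
  if α then P.take (r - 1) else P.take r

/-- The initial value `m_{r+1}` (for `α = 0`) or `m_r` (for `α = 1`) fed to Ψ. -/
def psiM (P : List (List ℕ)) (r : ℕ) (α : Bool) : ℕ :=
  if α then ((RowOf P r).getLast?).getD 0 else 0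

/-- The state of the reverse insertion Ψ on `(P, (r,·), α)` after processing row `i`:
the working tableau restricted to rows `≥ i` (i.e. `P'_{≥ i}`), the value `m_i`
ejected from row `i`, and the flag `α_i`. -/
def psiStage (P : List (List ℕ)) (r : ℕ) (α : Bool) (i : ℕ) :
    List (List ℕ) × ℕ × Bool :=
  psiRows ((psiUpper P r α).drop (i - 1)) (psiBase P r α) (psiM P r α) α

/-- The reverse insertion Ψ: input a decreasing tableau `P`, the row index `r` of a
removable cell, and `α ∈ {0,1}`; output the new tableau `P'` and the value `m`. -/
def psi (P : List (List ℕ)) (r : ℕ) (α : Bool) : List (List ℕ) × ℕ :=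
  ((psiStage P r α 1).1, (psiStage P r α 1).2.1)

/-- The forward insertion of a value `N` into a tableau (list of rows, processed
top-down). Returns the new tableau, the row and column (1-indexed) of the
terminating cell, and the flag `α`. -/
def phiRows : ℕ → List (List ℕ) → List (List ℕ) × ℕ × ℕ × Bool
  | N, [] => ([[N]], 1, 1, true)                                   -- T1 (new row)
  | N, R :: rest =>
    match (R.filter fun y => decide (y ≤ N)).max? with
    | none => ((R ++ [N]) :: rest, 1, R.length + 1, true)          -- T1 (append)
    | some n1 =>
      let R' := replaceVal R n1 N
      let j := R.idxOf n1
      let n2 := R.getD (j + 1) 0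
      if n1 = N && R.contains (N - 1) then                         -- Dummy
        let o := phiRows (N - 1) rest
        (R' :: o.1, o.2.1 + 1, o.2.2.1, o.2.2.2)
      else if decide (n1 < N) && !(ejectableB rest n1) then        -- Direct Repl.
        let o := phiRows n1 rest
        (R' :: o.1, o.2.1 + 1, o.2.2.1, o.2.2.2)
      else
        match largestEjectableBetween rest n2 n1 with
        | some y =>                                                -- IR1
          let o := phiRows y rest
          (R' :: o.1, o.2.1 + 1, o.2.2.1, o.2.2.2)
        | none =>
          if n2 = 0 then (R' :: rest, 1, j + 1, false)             -- T2
          else                                                     -- IR2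
            let o := phiRows n2 rest
            (R' :: o.1, o.2.1 + 1, o.2.2.1, o.2.2.2)

/-- The forward insertion Φ of `m` into the decreasing tableau `P`. -/
def phi (P : List (List ℕ)) (m : ℕ) : List (List ℕ) × ℕ × ℕ × Bool := phiRows m P

/-- Edelman–Greene reverse row insertion: process rows bottom-to-top, always
replacing `m_i` by `m_{i+1}`. -/
def egRows : List (List ℕ) → List (List ℕ) → ℕ → List (List ℕ) × ℕ
  | [], B, m => (B, m)
  | R :: rest, B, m =>
    let s := egRows rest B m
    let mi := ((R.filter fun y => decide (s.2 < y)).min?).getD 0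
    (replaceVal R mi s.2 :: s.1, mi)

/-- EG reverse row insertion at the removable cell in row `r` of `P`. -/
def egRev (P : List (List ℕ)) (r : ℕ) : List (List ℕ) × ℕ :=
  egRows (P.take (r - 1)) (psiBase P r true) (psiM P r true)

/-- The row reading word: rows from bottom to top, each left to right. -/
def rowWord (T : List (List ℕ)) : List ℕ := T.reverse.flatten

/-- The shape obtained by removing the cell at the end of row `r` (1-indexed). -/
def shapeMinus (sh : List ℕ) (r : ℕ) : List ℕ :=
  (sh.set (r - 1) (sh.getD (r - 1) 0 - 1)).filter fun n => decide (n ≠ 0)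

/-- The shape obtained by adding one cell at the end of row `r` (1-indexed). -/
def shapePlus (sh : List ℕ) (r : ℕ) : List ℕ :=
  if r ≤ sh.length then sh.set (r - 1) (sh.getD (r - 1) 0 + 1) else sh ++ [1]

/-- The bumping path of the removable cell `(r,c)` of `T`: `m r` is the entry at
`(r,c)`, and for `1 ≤ i < r`, `m i` is the smallest entry of row `i` of `T`
exceeding `m (i+1)`. -/
def IsBumpingPath (T : List (List ℕ)) (r c : ℕ) (m : ℕ → ℕ) : Prop :=
  m r = (RowOf T r).getD (c - 1) 0 ∧
  ∀ i, 1 ≤ i → i < r →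
    m i ∈ RowOf T i ∧ m (i + 1) < m i ∧ ∀ y ∈ RowOf T i, m (i + 1) < y → m i ≤ y

/-- A compatible pair of words `(a, i)`: same length, positive letters, `i` weakly
decreasing, and equal consecutive `i`-letters force strictly increasing `a`-letters. -/
def CompatiblePair (a i : List ℕ) : Prop :=
  a.length = i.length ∧ IsPosWord a ∧ IsPosWord i ∧
    (i.zip a).Chain' fun p q => q.1 ≤ p.1 ∧ (p.1 = q.1 → p.2 < q.2)

/-- A set-valued tableau (of partition shape, presented as a list of rows of
finite sets): nonempty sets of positive integers, `max ≤ min` along rows,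
`max < min` down columns. -/
def IsSVT (Q : List (List (Finset ℕ))) : Prop :=
  (∀ R ∈ Q, R ≠ []) ∧
  Q.Chain' (fun R S => S.length ≤ R.length) ∧
  (∀ R ∈ Q, ∀ S ∈ R, S.Nonempty ∧ ∀ x ∈ S, 0 < x) ∧
  (∀ R ∈ Q, R.Chain' fun S S' => ∀ x ∈ S, ∀ y ∈ S', x ≤ y) ∧
  Q.Chain' fun R S => ∀ j < S.length, ∀ x ∈ R.getD j ∅, ∀ y ∈ S.getD j ∅, x < y

/-- Record the value `k` in the recording tableau `Q` at cell `(r,c)`: in a new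
cell if `newCell = true`, otherwise adding `k` to the set already there. -/
def recordCell (Q : List (List (Finset ℕ))) (r c k : ℕ) (newCell : Bool) :
    List (List (Finset ℕ)) :=
  if newCell then
    (if r ≤ Q.length then Q.set (r - 1) (Q.getD (r - 1) [] ++ [{k}]) else Q ++ [[{k}]])
  else
    Q.set (r - 1)
      ((Q.getD (r - 1) []).set (c - 1) (insert k ((Q.getD (r - 1) []).getD (c - 1) ∅)))

/-- The insertion correspondence: insert the letters of `a` successively by Φ,
recording the insertion of `a_k` with the value `i_k`. -/
def tildePhi (a i : List ℕ) : List (List ℕ) × List (List (Finset ℕ)) :=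
  ((a.zip i).reverse).foldl
    (fun PQ x =>
      let o := phi PQ.1 x.1
      (o.1, recordCell PQ.2 o.2.1 o.2.2.1 x.2 o.2.2.2))
    ([], [])

/-- The weight (multiset of entries) of a set-valued tableau. -/
def svtWeight (Q : List (List (Finset ℕ))) : Multiset ℕ :=
  (Q.flatten.map Finset.val).sum

namespace Pieri
open List

def eject (R : List ℕ) (m : ℕ) : ℕ := ((R.filter fun y => decide (m < y)).min?).getD 0

def ejectChain : List (List ℕ) → ℕ → ℕ
  | [], v => v
  | R :: rest, v => eject R (ejectChain rest v)

def rowRel (X Y : List ℕ) : Prop :=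
  Y.length ≤ X.length ∧ ∀ j < Y.length, Y.getD j 0 < X.getD j 0

def sd (R : List ℕ) : Prop := R.Chain' (fun x y => y < x)

lemma getD_mem {R : List ℕ} {j : ℕ} (h : j < R.length) : R.getD j 0 ∈ R := by
  rw [List.getD_eq_getElem _ _ h]; exact List.getElem_mem _

lemma mem_index {R : List ℕ} {x : ℕ} (h : x ∈ R) : ∃ j, j < R.length ∧ R.getD j 0 = x := by
  obtain ⟨n, hn, e⟩ := List.mem_iff_getElem.mp h
  exact ⟨n, hn, by rw [List.getD_eq_getElem _ _ hn, e]⟩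

lemma sd_pairwise {R : List ℕ} (hsd : sd R) {i j : ℕ} (hij : i < j) (hj : j < R.length) :
    R.getD j 0 < R.getD i 0 := by
  have ht : Trans (fun x y : ℕ => y < x) (fun x y : ℕ => y < x) (fun x y : ℕ => y < x) := ⟨fun h1 h2 => lt_trans h2 h1⟩
  have hp := (List.isChain_iff_pairwise (R := fun x y : ℕ => y < x) (l := R)).mp hsd
  have := List.pairwise_iff_getElem.mp hp i j (lt_trans hij hj) hj hij
  rwa [List.getD_eq_getElem _ _ hj, List.getD_eq_getElem _ _ (lt_trans hij hj)]

/-- In a strictly decreasing list, values determine indices. -/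
lemma sd_inj {R : List ℕ} (hsd : sd R) {i j : ℕ} (hi : i < R.length) (hj : j < R.length)
    (h : R.getD i 0 = R.getD j 0) : i = j := by
  rcases lt_trichotomy i j with h' | h' | h'
  · exact absurd (sd_pairwise hsd h' hj) (by omega)
  · exact h'
  · exact absurd (sd_pairwise hsd h' hi) (by omega)

lemma eject_spec {R : List ℕ} {m : ℕ} (h : ∃ y ∈ R, m < y) :
    eject R m ∈ R ∧ m < eject R m ∧ ∀ y ∈ R, m < y → eject R m ≤ y := by
  obtain ⟨y, hy, hmy⟩ := h
  set L := R.filter fun y => decide (m < y) with hL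
  have hyL : y ∈ L := List.mem_filter.mpr ⟨hy, by simpa using hmy⟩
  rcases ho : L.min? with _ | a
  · rw [List.min?_eq_none_iff] at ho; rw [ho] at hyL; simp at hyL
  · have ho2 := ho
    rw [List.min?_eq_some_iff'] at ho2
    obtain ⟨haL, hmin⟩ := ho2
    have h1 := List.mem_filter.mp haL
    have hea : eject R m = a := by rw [eject, ← hL, ho]; rfl
    rw [hea]
    refine ⟨h1.1, by simpa using h1.2, fun z hz hmz => hmin z ?_⟩
    exact List.mem_filter.mpr ⟨hz, by simpa using hmz⟩

lemma replaceVal_length (R : List ℕ) (o n : ℕ) : (replaceVal R o n).length = R.length := by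
  simp [replaceVal]

lemma replaceVal_getD {R : List ℕ} (o n : ℕ) {j : ℕ} (h : j < R.length) :
    (replaceVal R o n).getD j 0 = if R.getD j 0 = o then n else R.getD j 0 := by
  rw [List.getD_eq_getElem _ _ (by rw [replaceVal_length]; exact h), List.getD_eq_getElem _ _ h]
  simp [replaceVal]

lemma mem_replaceVal {R : List ℕ} {o n y : ℕ} (h : y ∈ replaceVal R o n) :
    ∃ z ∈ R, y = if z = o then n else z := by
  obtain ⟨z, hz, e⟩ := List.mem_map.mp h
  exact ⟨z, hz, e.symm⟩

lemma psiRowStep_cases (R : List ℕ) (B : List (List ℕ)) (m1 : ℕ) (a1 : Bool) :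
    (psiRowStep R B m1 a1).2.1 = eject R m1 ∧
    ((psiRowStep R B m1 a1).1 = R ∧ (eject R m1 - 1) ∈ R ∨
     ((psiRowStep R B m1 a1).1 = replaceVal R (eject R m1) m1 ∧ (eject R m1 - 1) ∉ R) ∨
     (∃ x, smallestEjectableBetween B m1 (eject R m1) = some x ∧
        (psiRowStep R B m1 a1).1 = replaceVal R (eject R m1) x ∧ (eject R m1 - 1) ∉ R) ∨
     ((psiRowStep R B m1 a1).1 = R ∧
        smallestEjectableBetween B m1 (eject R m1) = none ∧ (eject R m1 - 1) ∉ R)) := by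
  have hE : ((R.filter fun y => decide (m1 < y)).min?).getD 0 = eject R m1 := rfl
  rw [psiRowStep]
  simp only [hE]
  by_cases hd : R.contains (eject R m1 - 1)
  · rw [if_pos hd]
    exact ⟨rfl, Or.inl ⟨rfl, by simpa using hd⟩⟩
  · rw [if_neg hd]
    by_cases hdir : (a1 && !(R.contains m1)) = true
    · rw [if_pos hdir]
      exact ⟨rfl, Or.inr (Or.inl ⟨rfl, by simpa using hd⟩)⟩
    · rw [if_neg hdir]
      rcases hs : smallestEjectableBetween B m1 (eject R m1) with _ | x
      · exact ⟨rfl, Or.inr (Or.inr (Or.inr ⟨rfl, rfl, by simpa using hd⟩))⟩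
      · exact ⟨rfl, Or.inr (Or.inr (Or.inl ⟨x, rfl, rfl, by simpa using hd⟩))⟩

lemma eject_ejectable {R : List ℕ} {Bst : List (List ℕ)} {w₁ : ℕ}
    (hex : ∃ y ∈ R, w₁ < y) (h2 : ejectableB Bst w₁ = true) :
    ejectableB (R :: Bst) (eject R w₁) = true := by
  obtain ⟨hmem, hgt, hmin⟩ := eject_spec hex
  by_cases hw1 : eject R w₁ - 1 ∈ R
  · have he : eject R w₁ - 1 = w₁ := by
      have h1 : ¬ (w₁ < eject R w₁ - 1) := fun hlt => absurd (hmin _ hw1 hlt) (by omega)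
      omega
    show (R.contains (eject R w₁) && _) = true
    simp [hmem, he, h2]
  · show (R.contains (eject R w₁) && _) = true
    simp [hmem, hw1]

lemma mem_seb_filter {Bst : List (List ℕ)} {w₁ m₂ mf : ℕ}
    (h2 : ejectableB Bst w₁ = true) (hlo : m₂ < w₁) (hhi : w₁ < mf) :
    w₁ ∈ (Bst.headD []).filter fun x => ejectableB Bst x && decide (m₂ < x) && decide (x < mf) := by
  cases Bst with
  | nil => simp [ejectableB] at h2
  | cons H rest =>
    have hcont : H.contains w₁ = true := by
      have h2' : (H.contains w₁ && (!(H.contains (w₁ - 1)) || ejectableB rest (w₁ - 1))) = true := h2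
      exact (Bool.and_eq_true_iff.mp h2').1
    refine List.mem_filter.mpr ⟨?_, by simp [h2, hlo, hhi]⟩
    simpa using hcont

lemma replace_ex {R : List ℕ} {mf x w₁ jm : ℕ} (hsd : sd R)
    (hjm1 : 1 ≤ jm) (hjmlen : jm < R.length) (hjmval : R.getD jm 0 = mf)
    (h4 : ∃ j, j < R.length ∧ w₁ < R.getD j 0) :
    ∃ y ∈ replaceVal R mf x, w₁ < y := by
  obtain ⟨j', hj'len, hj'gt⟩ := h4
  by_cases hc : R.getD j' 0 = mf
  · have hjj : j' = jm := sd_inj hsd hj'len hjmlen (hc.trans hjmval.symm)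
    have hlt : R.getD jm 0 < R.getD (jm - 1) 0 := sd_pairwise hsd (by omega) hjmlen
    have hne : R.getD (jm - 1) 0 ≠ mf := by omega
    refine ⟨(replaceVal R mf x).getD (jm - 1) 0,
      getD_mem (by rw [replaceVal_length]; omega), ?_⟩
    rw [replaceVal_getD _ _ (by omega), if_neg hne]
    have : R.getD j' 0 = R.getD jm 0 := by rw [hjj]
    omega
  · refine ⟨(replaceVal R mf x).getD j' 0, getD_mem (by rw [replaceVal_length]; exact hj'len), ?_⟩
    rw [replaceVal_getD _ _ hj'len, if_neg hc]
    exact hj'gt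
lemma step {R : List ℕ} {Bst : List (List ℕ)} {m₂ : ℕ} {a₂ : Bool} {w₁ : ℕ}
    (hsd : sd R) (h1 : m₂ < w₁) (h2 : ejectableB Bst w₁ = true)
    (h3 : ∃ j, 1 ≤ j ∧ j < R.length ∧ m₂ < R.getD j 0)
    (h4 : ∃ j, j < R.length ∧ w₁ < R.getD j 0) :
    (psiRowStep R Bst m₂ a₂).2.1 < eject (psiRowStep R Bst m₂ a₂).1 w₁ ∧
    ejectableB ((psiRowStep R Bst m₂ a₂).1 :: Bst) (eject (psiRowStep R Bst m₂ a₂).1 w₁) = true ∧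
    (∃ j, 1 ≤ j ∧ j < R.length ∧ R.getD j 0 = (psiRowStep R Bst m₂ a₂).2.1) ∧
    (∃ j, j < R.length ∧ R.getD j 0 = eject (psiRowStep R Bst m₂ a₂).1 w₁) := by
  obtain ⟨j₀, hj₀1, hj₀len, hj₀gt⟩ := h3
  obtain ⟨hmfR, hmfgt, hmfmin⟩ := eject_spec ⟨_, getD_mem hj₀len, hj₀gt⟩
  obtain ⟨jm, hjmlen, hjmval⟩ := mem_index hmfR
  have hjm1 : 1 ≤ jm := by
    rcases Nat.eq_zero_or_pos jm with h0 | h; swap; · exact h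
    exfalso
    have hle : eject R m₂ ≤ R.getD j₀ 0 := hmfmin _ (getD_mem hj₀len) hj₀gt
    have := sd_pairwise hsd (show 0 < j₀ by omega) hj₀len
    rw [h0] at hjmval; omega
  obtain ⟨hmi, hcases⟩ := psiRowStep_cases R Bst m₂ a₂
  suffices h : (∀ y ∈ (psiRowStep R Bst m₂ a₂).1, w₁ < y → eject R m₂ < y) ∧
      (∃ y ∈ (psiRowStep R Bst m₂ a₂).1, w₁ < y) ∧
      (∀ y ∈ (psiRowStep R Bst m₂ a₂).1, eject R m₂ < y → y ∈ R) by
    obtain ⟨hgap, hex, hback⟩ := h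
    obtain ⟨hwmem, hwgt, hwmin⟩ := eject_spec hex
    have hk1 : eject R m₂ < eject (psiRowStep R Bst m₂ a₂).1 w₁ := hgap _ hwmem hwgt
    refine ⟨by rw [hmi]; exact hk1, eject_ejectable hex h2,
      ⟨jm, hjm1, hjmlen, by rw [hmi]; exact hjmval⟩, ?_⟩
    obtain ⟨jw, hjwlen, hjwval⟩ := mem_index (hback _ hwmem hk1)
    exact ⟨jw, hjwlen, hjwval⟩
  rcases hcases with ⟨hR', hdum⟩ | ⟨hR', _⟩ | ⟨x, hsome, hR', _⟩ | ⟨hR', hnone, _⟩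
  · -- Dummy
    have hm₂ : m₂ = eject R m₂ - 1 := by
      have h1' : ¬ (m₂ < eject R m₂ - 1) := fun hlt => absurd (hmfmin _ hdum hlt) (by omega)
      omega
    have hw₁mf : eject R m₂ ≤ w₁ := by omega
    rw [hR']
    obtain ⟨j', hj'len, hj'gt⟩ := h4
    exact ⟨fun y _ hy => lt_of_le_of_lt hw₁mf hy, ⟨_, getD_mem hj'len, hj'gt⟩, fun y hy _ => hy⟩
  · -- Direct replacement
    rw [hR']
    refine ⟨fun y hy hwy => ?_, replace_ex hsd hjm1 hjmlen hjmval h4, fun y hy hmy => ?_⟩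
    · obtain ⟨z, hz, e⟩ := mem_replaceVal hy
      by_cases hzmf : z = eject R m₂
      · rw [if_pos hzmf] at e; omega
      · rw [if_neg hzmf] at e
        subst e
        have := hmfmin _ hz (by omega)
        omega
    · obtain ⟨z, hz, e⟩ := mem_replaceVal hy
      by_cases hzmf : z = eject R m₂
      · rw [if_pos hzmf] at e; omega
      · rw [if_neg hzmf] at e; exact e ▸ hz
  · -- Indirect replacement
    rw [smallestEjectableBetween, List.min?_eq_some_iff'] at hsome
    obtain ⟨hxfil, hminx⟩ := hsome
    obtain ⟨hxhead, hxcond⟩ := List.mem_filter.mp hxfil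
    have hxlo : m₂ < x := by
      have := (Bool.and_eq_true_iff.mp (Bool.and_eq_true_iff.mp hxcond).1).2
      simpa using this
    have hxhi : x < eject R m₂ := by simpa using (Bool.and_eq_true_iff.mp hxcond).2
    have hxle : w₁ < eject R m₂ → x ≤ w₁ := fun hc => hminx _ (mem_seb_filter h2 h1 hc)
    rw [hR']
    refine ⟨fun y hy hwy => ?_, replace_ex hsd hjm1 hjmlen hjmval h4, fun y hy hmy => ?_⟩
    · obtain ⟨z, hz, e⟩ := mem_replaceVal hy
      by_cases hzmf : z = eject R m₂
      · rw [if_pos hzmf] at e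
        subst e
        by_cases hc : w₁ < eject R m₂
        · have := hxle hc; omega
        · omega
      · rw [if_neg hzmf] at e
        subst e
        have := hmfmin _ hz (by omega)
        omega
    · obtain ⟨z, hz, e⟩ := mem_replaceVal hy
      by_cases hzmf : z = eject R m₂
      · rw [if_pos hzmf] at e; omega
      · rw [if_neg hzmf] at e; exact e ▸ hz
  · -- No replacement
    rw [smallestEjectableBetween, List.min?_eq_none_iff] at hnone
    have hw₁mf : eject R m₂ ≤ w₁ := by
      by_contra hc
      have := mem_seb_filter h2 h1 (by omega : w₁ < eject R m₂)
      rw [hnone] at this; simp at this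
    rw [hR']
    obtain ⟨j', hj'len, hj'gt⟩ := h4
    exact ⟨fun y _ hy => lt_of_le_of_lt hw₁mf hy, ⟨_, getD_mem hj'len, hj'gt⟩, fun y hy _ => hy⟩
lemma ejectChain_append (A C : List (List ℕ)) (v : ℕ) :
    ejectChain (A ++ C) v = ejectChain A (ejectChain C v) := by
  induction A with
  | nil => rfl
  | cons R rest ih => simp [ejectChain, ih]

lemma psiRows_eq (R : List ℕ) (rest B : List (List ℕ)) (m : ℕ) (a : Bool) :
    psiRows (R :: rest) B m a =
      ((psiRowStep R (psiRows rest B m a).1 (psiRows rest B m a).2.1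
          (psiRows rest B m a).2.2).1 :: (psiRows rest B m a).1,
        (psiRowStep R (psiRows rest B m a).1 (psiRows rest B m a).2.1
          (psiRows rest B m a).2.2).2.1,
        (psiRowStep R (psiRows rest B m a).1 (psiRows rest B m a).2.1
          (psiRows rest B m a).2.2).2.2) := rfl

lemma psiRows_append (A C B : List (List ℕ)) (m : ℕ) (a : Bool) :
    psiRows (A ++ C) B m a =
      psiRows A (psiRows C B m a).1 (psiRows C B m a).2.1 (psiRows C B m a).2.2 := by
  induction A with
  | nil => rfl
  | cons R rest ih => rw [List.cons_append, psiRows_eq, psiRows_eq, ih]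

lemma psiRows_snd (Rs : List (List ℕ)) (B : List (List ℕ)) (m : ℕ) (a : Bool) :
    (psiRows Rs B m a).2.1 = ejectChain Rs m := by
  induction Rs with
  | nil => rfl
  | cons R rest ih =>
    rw [psiRows_eq, ejectChain, ← ih]
    exact (psiRowStep_cases R _ _ _).1

lemma psiRowStep_length (R : List ℕ) (B : List (List ℕ)) (m : ℕ) (a : Bool) :
    (psiRowStep R B m a).1.length = R.length := by
  rcases (psiRowStep_cases R B m a).2 with ⟨h, _⟩ | ⟨h, _⟩ | ⟨x, _, h, _⟩ | ⟨h, _⟩ <;>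
    rw [h] <;> simp [replaceVal_length]

lemma psiRows_struct (Rs : List (List ℕ)) (B : List (List ℕ)) (m : ℕ) (a : Bool) :
    ∃ new, (psiRows Rs B m a).1 = new ++ B ∧ new.map List.length = Rs.map List.length := by
  induction Rs with
  | nil => exact ⟨[], rfl, rfl⟩
  | cons R rest ih =>
    obtain ⟨new, h1, h2⟩ := ih
    refine ⟨(psiRowStep R (psiRows rest B m a).1 (psiRows rest B m a).2.1
      (psiRows rest B m a).2.2).1 :: new, ?_, ?_⟩
    · rw [psiRows_eq, h1]; rfl
    · simp [h2, psiRowStep_length]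

lemma climb (Cs : List (List ℕ)) (B₀ : List (List ℕ)) (T₁ : List ℕ) (v₀ : ℕ)
    (hchain : (Cs ++ [T₁]).Chain' rowRel)
    (h0 : 0 < v₀)
    (h2 : ejectableB B₀ v₀ = true)
    (h4 : ∃ j, j < T₁.length ∧ T₁.getD j 0 = v₀) :
    0 < ejectChain Cs v₀ ∧
    ejectableB (Cs ++ B₀) (ejectChain Cs v₀) = true ∧
    (∃ j, j < ((Cs ++ [T₁]).headD []).length ∧
      ((Cs ++ [T₁]).headD []).getD j 0 = ejectChain Cs v₀) := by
  induction Cs with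
  | nil => exact ⟨h0, h2, h4⟩
  | cons R rest ih =>
    obtain ⟨H, t, hHt⟩ : ∃ H t, rest ++ [T₁] = H :: t := by
      cases rest with
      | nil => exact ⟨T₁, [], rfl⟩
      | cons X xs => exact ⟨X, xs ++ [T₁], rfl⟩
    rw [List.cons_append, hHt, List.Chain', List.isChain_cons_cons] at hchain
    obtain ⟨hrelRH, hchainrest⟩ := hchain
    obtain ⟨hpos, hej, j, hjlen, hjval⟩ := ih (by rw [hHt]; exact hchainrest)
    rw [hHt] at hjlen hjval
    simp only [List.headD_cons] at hjlen hjval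
    have hex : ∃ y ∈ R, ejectChain rest v₀ < y := by
      refine ⟨R.getD j 0, getD_mem (lt_of_lt_of_le hjlen hrelRH.1), ?_⟩
      have := hrelRH.2 j hjlen
      omega
    obtain ⟨hwmem, hwgt, hwmin⟩ := eject_spec hex
    refine ⟨by have := ejectChain; show 0 < eject R (ejectChain rest v₀); omega, ?_, ?_⟩
    · show ejectableB (R :: (rest ++ B₀)) (eject R (ejectChain rest v₀)) = true
      exact eject_ejectable hex hej
    · obtain ⟨jw, hjwlen, hjwval⟩ := mem_index hwmem
      exact ⟨jw, by simpa using hjwlen, by simpa [ejectChain] using hjwval⟩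

lemma master (Rs : List (List ℕ)) (B : List (List ℕ)) (m : ℕ) (a : Bool) (v : ℕ) (T₀ : List ℕ)
    (hchain : (Rs ++ [T₀]).Chain' rowRel)
    (hsd : ∀ R ∈ Rs, sd R)
    (h1 : m < v) (h2 : ejectableB B v = true)
    (h3 : ∃ j, 1 ≤ j ∧ j < T₀.length ∧ T₀.getD j 0 = m)
    (h4 : ∃ j, j < T₀.length ∧ T₀.getD j 0 = v) :
    (psiRows Rs B m a).2.1 < ejectChain ((psiRows Rs B m a).1.take Rs.length) v ∧
    ejectableB (psiRows Rs B m a).1 (ejectChain ((psiRows Rs B m a).1.take Rs.length) v) = true ∧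
    (∃ j, 1 ≤ j ∧ j < ((Rs ++ [T₀]).headD []).length ∧
      ((Rs ++ [T₀]).headD []).getD j 0 = (psiRows Rs B m a).2.1) ∧
    (∃ j, j < ((Rs ++ [T₀]).headD []).length ∧
      ((Rs ++ [T₀]).headD []).getD j 0 = ejectChain ((psiRows Rs B m a).1.take Rs.length) v) := by
  induction Rs with
  | nil => exact ⟨h1, h2, h3, h4⟩
  | cons R rest ih =>
    obtain ⟨H, t, hHt⟩ : ∃ H t, rest ++ [T₀] = H :: t := by
      cases rest with
      | nil => exact ⟨T₀, [], rfl⟩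
      | cons X xs => exact ⟨X, xs ++ [T₀], rfl⟩
    rw [List.cons_append, hHt, List.Chain', List.isChain_cons_cons] at hchain
    obtain ⟨hrelRH, hchainrest⟩ := hchain
    obtain ⟨ik1, ik2, ⟨jm, hjm1, hjmlen, hjmval⟩, ⟨jw, hjwlen, hjwval⟩⟩ :=
      ih (by rw [hHt]; exact hchainrest) (fun S hS => hsd S (List.mem_cons_of_mem _ hS))
    rw [hHt] at hjmlen hjmval hjwlen hjwval
    simp only [List.headD_cons] at hjmlen hjmval hjwlen hjwval
    have hsdR : sd R := hsd R List.mem_cons_self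
    have h3s : ∃ j, 1 ≤ j ∧ j < R.length ∧ (psiRows rest B m a).2.1 < R.getD j 0 := by
      refine ⟨jm, hjm1, lt_of_lt_of_le hjmlen hrelRH.1, ?_⟩
      have := hrelRH.2 jm hjmlen
      omega
    have h4s : ∃ j, j < R.length ∧ ejectChain ((psiRows rest B m a).1.take rest.length) v < R.getD j 0 := by
      refine ⟨jw, lt_of_lt_of_le hjwlen hrelRH.1, ?_⟩
      have := hrelRH.2 jw hjwlen
      omega
    obtain ⟨k1, k2, k3, k4⟩ := step (Bst := (psiRows rest B m a).1)
      (a₂ := (psiRows rest B m a).2.2) hsdR ik1 ik2 h3s h4s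
    rw [psiRows_eq]
    simp only [List.length_cons, List.take_succ_cons]
    exact ⟨k1, k2, by simpa using k3, by simpa [ejectChain] using k4⟩
lemma getD_drop (l : List (List ℕ)) (k i : ℕ) :
    (l.drop k).getD i [] = l.getD (k + i) [] := by
  by_cases h : k + i < l.length
  · rw [List.getD_eq_getElem _ _ (by rw [List.length_drop]; omega),
      List.getD_eq_getElem _ _ h]
    rw [List.getElem_drop]
  · have h1 : (l.drop k).length ≤ i := by rw [List.length_drop]; omega
    rw [List.getD_eq_default _ _ h1, List.getD_eq_default _ _ (by omega)]

lemma headD_take (l : List (List ℕ)) (j : ℕ) :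
    (l.take (j + 1)).headD [] = l.headD [] := by
  cases l <;> rfl

lemma take_succ_getD (l : List (List ℕ)) {n : ℕ} (h : n < l.length) :
    l.take (n + 1) = l.take n ++ [l.getD n []] := by
  rw [List.take_succ, List.getElem?_eq_getElem h, List.getD_eq_getElem _ _ h]
  rfl

lemma map_length_getD {A B : List (List ℕ)} (h : A.map List.length = B.map List.length)
    {i : ℕ} (hi : i < A.length) : (A.getD i []).length = (B.getD i []).length := by
  have hlen : A.length = B.length := by
    have := congrArg List.length h; simpa using this
  rw [List.getD_eq_getElem _ _ hi, List.getD_eq_getElem _ _ (hlen ▸ hi)]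
  have h1 : (A.map List.length).getD i 0 = (B.map List.length).getD i 0 := by rw [h]
  rwa [List.getD_eq_getElem _ _ (by simpa using hi), List.getD_eq_getElem _ _ (by simpa using hlen ▸ hi),
    List.getElem_map, List.getElem_map] at h1

lemma chain_len {P : List (List ℕ)} (h : P.Chain' rowRel) {i j : ℕ} (hij : i ≤ j)
    (hj : j < P.length) : (P.getD j []).length ≤ (P.getD i []).length := by
  rcases Nat.eq_or_lt_of_le hij with rfl | hij'
  · exact le_refl _
  · have hch : P.Chain' (fun X Y => Y.length ≤ X.length) := h.imp fun a b hab => hab.1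
    have ht : Trans (fun X Y : List ℕ => Y.length ≤ X.length) (fun X Y : List ℕ => Y.length ≤ X.length) (fun X Y : List ℕ => Y.length ≤ X.length) :=
      ⟨fun h1 h2 => le_trans h2 h1⟩
    have hp := (List.isChain_iff_pairwise (R := fun X Y : List ℕ => Y.length ≤ X.length) (l := P)).mp hch
    have := List.pairwise_iff_getElem.mp hp i j (by omega) hj hij'
    rwa [List.getD_eq_getElem _ _ hj, List.getD_eq_getElem _ _ (by omega)]

lemma chain_rel {P : List (List ℕ)} (h : P.Chain' rowRel) {i : ℕ} (hi : i + 1 < P.length) :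
    rowRel (P.getD i []) (P.getD (i + 1) []) := by
  have := List.isChain_iff_getElem.mp h i (by omega)
  rw [List.getD_eq_getElem _ _ (by omega : i < P.length), List.getD_eq_getElem _ _ hi]
  simpa using this

lemma sd_min_last {R : List ℕ} (hsd : sd R) {i : ℕ} (hi : i < R.length) :
    R.getD (R.length - 1) 0 ≤ R.getD i 0 := by
  rcases Nat.eq_or_lt_of_le (by omega : i ≤ R.length - 1) with he | hlt
  · rw [he]
  · exact le_of_lt (sd_pairwise hsd hlt (by omega))

lemma eject_zero {R : List ℕ} (hsd : sd R) (hpos : ∀ x ∈ R, 0 < x) (hne : 0 < R.length) :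
    eject R 0 = R.getD (R.length - 1) 0 := by
  have hmem : R.getD (R.length - 1) 0 ∈ R := getD_mem (by omega)
  obtain ⟨h1, h2, h3⟩ := eject_spec ⟨_, hmem, hpos _ hmem⟩
  have h4 := h3 _ hmem (hpos _ hmem)
  obtain ⟨j, hj, hjv⟩ := mem_index h1
  have := sd_min_last hsd hj
  omega

lemma ejectable_last {R : List ℕ} (rest : List (List ℕ)) (hsd : sd R)
    (hpos : ∀ x ∈ R, 0 < x) (hne : 0 < R.length) :
    ejectableB (R :: rest) (R.getD (R.length - 1) 0) = true := by
  set v := R.getD (R.length - 1) 0 with hv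
  have hmem : v ∈ R := getD_mem (by omega)
  have hnm : v - 1 ∉ R := by
    intro hmem'
    obtain ⟨j, hj, hjv⟩ := mem_index hmem'
    have h1 := sd_min_last hsd hj
    have h2 := hpos _ hmem
    omega
  show (R.contains v && _) = true
  simp [hmem, hnm]

lemma sd_dropLast {R : List ℕ} (hsd : sd R) : sd R.dropLast := by
  rw [List.dropLast_eq_take]
  exact List.IsChain.take hsd _

lemma getD_dropLast {R : List ℕ} {j : ℕ} (h : j < R.length - 1) :
    R.dropLast.getD j 0 = R.getD j 0 := by
  rw [List.getD_eq_getElem _ _ (by simpa using h), List.getD_eq_getElem _ _ (by omega)]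
  exact List.getElem_dropLast _

lemma getLast_getD {R : List ℕ} (h : R ≠ []) : R.getLast?.getD 0 = R.getD (R.length - 1) 0 := by
  rw [List.getLast?_eq_getLast h, List.getD_eq_getElem _ _ (by
    have := List.length_pos_iff.mpr h; omega)]
  simp [List.getLast_eq_getElem]

lemma psi_eq (P : List (List ℕ)) (r : ℕ) (α : Bool) :
    psi P r α = ((psiRows (psiUpper P r α) (psiBase P r α) (psiM P r α) α).1,
      (psiRows (psiUpper P r α) (psiBase P r α) (psiM P r α) α).2.1) := by
  rw [psi, psiStage]
  norm_num
lemma getD_mem' {l : List (List ℕ)} {j : ℕ} (h : j < l.length) : l.getD j [] ∈ l := by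
  rw [List.getD_eq_getElem _ _ h]; exact List.getElem_mem _

lemma getD_take {l : List (List ℕ)} {n i : ℕ} (h : i < n) :
    (l.take n).getD i [] = l.getD i [] := by
  by_cases h2 : i < l.length
  · rw [List.getD_eq_getElem _ _ (by rw [List.length_take]; omega),
      List.getD_eq_getElem _ _ h2, List.getElem_take]
  · rw [List.getD_eq_default _ _ (by rw [List.length_take]; omega),
      List.getD_eq_default _ _ (by omega)]

lemma climbQ {Q : List (List ℕ)} {n k c₂ : ℕ}
    (hchain : (Q.drop n).Chain' rowRel)
    (hkn : n ≤ k) (hklen : k < Q.length)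
    (hT₁sd : sd (Q.getD k [])) (hT₁pos : ∀ x ∈ Q.getD k [], 0 < x)
    (hT₁len : (Q.getD k []).length = c₂) (hc21 : 1 ≤ c₂) :
    0 < ejectChain ((Q.drop n).take (k - n)) ((Q.getD k []).getD (c₂ - 1) 0) ∧
    ejectableB (Q.drop n) (ejectChain ((Q.drop n).take (k - n)) ((Q.getD k []).getD (c₂ - 1) 0)) = true ∧
    ∃ j, j < ((Q.drop n).headD []).length ∧
      ((Q.drop n).headD []).getD j 0 =
        ejectChain ((Q.drop n).take (k - n)) ((Q.getD k []).getD (c₂ - 1) 0) := by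
  set v₁ := (Q.getD k []).getD (c₂ - 1) 0 with hv₁
  have hv₁pos : 0 < v₁ := hT₁pos _ (getD_mem (by omega))
  have hejv₁ : ejectableB (Q.drop k) v₁ = true := by
    have hd : Q.drop k = Q.getD k [] :: Q.drop (k + 1) := by
      rw [List.drop_eq_getElem_cons hklen, List.getD_eq_getElem _ _ hklen]
    rw [hd]
    have := ejectable_last (Q.drop (k + 1)) hT₁sd hT₁pos (by omega)
    rwa [hT₁len] at this
  have hDget : (Q.drop n).getD (k - n) [] = Q.getD k [] := by
    rw [getD_drop]
    congr 1
    omega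
  have hklenD : k - n < (Q.drop n).length := by rw [List.length_drop]; omega
  have hCsid : (Q.drop n).take (k - n) ++ [Q.getD k []] = (Q.drop n).take (k - n + 1) := by
    rw [take_succ_getD _ hklenD, hDget]
  have hchCs : ((Q.drop n).take (k - n) ++ [Q.getD k []]).Chain' rowRel := by
    rw [hCsid]; exact hchain.take _
  have hB₀ : (Q.drop n).take (k - n) ++ Q.drop k = Q.drop n := by
    have h1 : (Q.drop n).drop (k - n) = Q.drop k := by
      rw [List.drop_drop]; congr 1; omega
    rw [← h1, List.take_append_drop]
  obtain ⟨c1, c2, j, hj, hjv⟩ := climb ((Q.drop n).take (k - n)) (Q.drop k) (Q.getD k []) v₁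
    hchCs hv₁pos hejv₁ ⟨c₂ - 1, by omega, rfl⟩
  rw [hB₀] at c2
  rw [hCsid, headD_take] at hj hjv
  exact ⟨c1, c2, j, hj, hjv⟩

lemma assembleFinal {P Q B : List (List ℕ)} {n k c₂ : ℕ} {α' : Bool} {m₀ v : ℕ} {a₀ : Bool}
    {T₀ : List ℕ}
    (hQdef : (psiRows (P.take n) B m₀ a₀).1 = Q)
    (hnP : n < P.length)
    (hT₀ : P.getD n [] = T₀)
    (hch : P.Chain' rowRel)
    (hsdP : ∀ R ∈ P, sd R)
    (h1 : m₀ < v) (h2' : ejectableB B v = true)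
    (h3 : ∃ j, 1 ≤ j ∧ j < T₀.length ∧ T₀.getD j 0 = m₀)
    (h4 : ∃ j, j < T₀.length ∧ T₀.getD j 0 = v)
    (hkn : n ≤ k) (hklen : k < Q.length)
    (hT₁sd : sd (Q.getD k [])) (hT₁pos : ∀ x ∈ Q.getD k [], 0 < x)
    (hT₁len : (Q.getD k []).length = c₂) (hc21 : 1 ≤ c₂)
    (hv : ejectChain ((Q.drop n).take (k - n)) ((Q.getD k []).getD (c₂ - 1) 0) = v) :
    (psi Q (k + 1) α').2 > (psiRows (P.take n) B m₀ a₀).2.1 := by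
  have hnlen : (P.take n).length = n := by rw [List.length_take]; omega
  set v₁ := (Q.getD k []).getD (c₂ - 1) 0 with hv₁
  have hT₁ne : Q.getD k [] ≠ [] := by
    intro h; rw [h] at hT₁len; simp at hT₁len; omega
  -- value of the second reverse insertion
  have hm' : (psi Q (k + 1) α').2 = ejectChain (Q.take k) v₁ := by
    rw [psi_eq]
    cases α' with
    | false =>
      have hup2 : psiUpper Q (k + 1) false = Q.take (k + 1) := by simp [psiUpper]
      have hM2 : psiM Q (k + 1) false = 0 := by simp [psiM]
      rw [hup2, hM2]
      show (psiRows (Q.take (k + 1)) _ 0 false).2.1 = _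
      rw [psiRows_snd, take_succ_getD _ hklen, ejectChain_append]
      show ejectChain (Q.take k) (eject (Q.getD k []) 0) = _
      rw [eject_zero hT₁sd hT₁pos (by omega), hT₁len]
    | true =>
      have hup2 : psiUpper Q (k + 1) true = Q.take k := by simp [psiUpper]
      have hM2 : psiM Q (k + 1) true = v₁ := by
        show (RowOf Q (k + 1)).getLast?.getD 0 = v₁
        have hRow : RowOf Q (k + 1) = Q.getD k [] := by simp [RowOf]
        rw [hRow, getLast_getD hT₁ne, hT₁len]
      rw [hup2, hM2]
      show (psiRows (Q.take k) _ v₁ true).2.1 = _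
      rw [psiRows_snd]
  -- split Q.take k and use master
  have hsplit : Q.take k = Q.take n ++ (Q.drop n).take (k - n) := by
    have h5 : n + (k - n) = k := by omega
    conv_lhs => rw [← h5]
    exact List.take_add
  have hchain : ((P.take n) ++ [T₀]).Chain' rowRel := by
    rw [← hT₀, ← take_succ_getD _ hnP]; exact hch.take _
  obtain ⟨K1, _, _, _⟩ := master (P.take n) B m₀ a₀ v T₀ hchain
    (fun R hR => hsdP R (List.take_subset _ _ hR)) h1 h2' h3 h4
  rw [hQdef, hnlen] at K1
  show (psiRows (P.take n) B m₀ a₀).2.1 < (psi Q (k + 1) α').2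
  rw [hm', hsplit, ejectChain_append, hv]
  exact K1
end Pieri
/-- Pieri property of reverse insertion: successive reverse insertions
at cells with `c₂ < c₁` eject values with `m' > m`. -/
theorem statement8 (P : List (List ℕ)) (r₁ c₁ r₂ c₂ : ℕ) (α α' : Bool)
    (hP : IsDecreasingTableau P) (h1 : IsRemovable P r₁ c₁)
    (h2 : IsRemovable (psi P r₁ α).1 r₂ c₂) (hc : c₂ < c₁) :
    (psi (psi P r₁ α).1 r₂ α').2 > (psi P r₁ α).2 := by
  open Pieri in
  obtain ⟨hr11, hr1len, hc11, hlen1, hlen1'⟩ := h1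
  obtain ⟨hr21, hr2len, hc21, hlen2, hlen2'⟩ := h2
  obtain ⟨hneP, hposP, hsdP', hchP⟩ := hP
  have hch : P.Chain' Pieri.rowRel := hchP
  have hsdP : ∀ R ∈ P, Pieri.sd R := hsdP'
  have hc12 : 2 ≤ c₁ := by omega
  obtain ⟨n, rfl⟩ : ∃ n, r₁ = n + 1 := ⟨r₁ - 1, by omega⟩
  obtain ⟨k, rfl⟩ : ∃ k, r₂ = k + 1 := ⟨r₂ - 1, by omega⟩
  have hnP : n < P.length := by omega
  have hrow1 : RowOf P (n + 1) = P.getD n [] := by simp [RowOf]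
  set T₀ := P.getD n [] with hT₀
  rw [hrow1] at hlen1
  have hrow2 : RowOf P (n + 1 + 1) = P.getD (n + 1) [] := by simp [RowOf]
  rw [hrow2] at hlen1'
  have hT₀mem : T₀ ∈ P := Pieri.getD_mem' hnP
  have hsdT₀ : Pieri.sd T₀ := hsdP _ hT₀mem
  have hposT₀ : ∀ x ∈ T₀, 0 < x := hposP _ hT₀mem
  have hT₀ne : T₀ ≠ [] := by intro h; rw [h] at hlen1; simp at hlen1; omega
  cases α with
  | true =>
    set e := T₀.getD (c₁ - 1) 0 with he
    set B := T₀.dropLast :: P.drop (n + 1) with hB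
    have hup : psiUpper P (n + 1) true = P.take n := by simp [psiUpper]
    have hdne : (RowOf P (n + 1)).dropLast ≠ [] := by
      rw [hrow1]
      intro hh
      have := congrArg List.length hh
      rw [List.length_dropLast, hlen1] at this
      simp at this; omega
    have hbase : psiBase P (n + 1) true = B := by
      rw [psiBase, if_pos rfl, if_neg hdne, hrow1]
    have hM : psiM P (n + 1) true = e := by
      rw [psiM, if_pos rfl, hrow1, Pieri.getLast_getD hT₀ne, hlen1]
    have hpsi1 : psi P (n + 1) true =
        ((psiRows (P.take n) B e true).1, (psiRows (P.take n) B e true).2.1) := by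
      rw [Pieri.psi_eq, hup, hbase, hM]
    set Q := (psiRows (P.take n) B e true).1 with hQdef
    have hQ1 : (psi P (n + 1) true).1 = Q := by rw [hpsi1]
    have hQ2 : (psi P (n + 1) true).2 = (psiRows (P.take n) B e true).2.1 := by rw [hpsi1]
    rw [hQ1] at hr2len hlen2
    rw [hQ1, hQ2]
    -- structure of Q
    obtain ⟨new, hstruct, hmap⟩ := Pieri.psiRows_struct (P.take n) B e true
    have hnew : new.length = n := by
      have := congrArg List.length hmap
      simp only [List.length_map] at this
      rw [this, List.length_take]; omega
    have hQdrop : Q.drop n = B := by rw [hQdef, hstruct, ← hnew, List.drop_left]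
    have hQlen : Q.length = P.length := by
      rw [hQdef, hstruct, hB]
      simp only [List.length_append, List.length_cons, List.length_drop, hnew]
      omega
    have hrowQ : RowOf Q (k + 1) = Q.getD k [] := by simp [RowOf]
    rw [hrowQ] at hlen2
    have hklen : k < Q.length := by omega
    have hQgetlow : ∀ i < n, (Q.getD i []).length = (P.getD i []).length := by
      intro i hi
      rw [hQdef, hstruct, List.getD_append _ _ _ _ (by omega),
        Pieri.map_length_getD hmap (by omega), Pieri.getD_take hi]
    have hkn : n ≤ k := by
      by_contra hlt
      push_neg at hlt
      have e1 : (Q.getD k []).length = (P.getD k []).length := hQgetlow _ hlt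
      have e2 := Pieri.chain_len hch (by omega : k ≤ n) hnP
      rw [← hT₀] at e2
      omega
    -- row k of Q
    have hQk : Q.getD k [] = if k = n then T₀.dropLast else P.getD k [] := by
      have h5 : Q.getD k [] = B.getD (k - n) [] := by
        rw [← hQdrop, Pieri.getD_drop]; congr 1; omega
      rcases Nat.eq_or_lt_of_le hkn with hE | hlt
      · have h7 : k - n = 0 := by omega
        rw [if_pos hE.symm, h5, h7]
        rfl
      · rw [if_neg (by omega), h5, hB]
        have h6 : k - n = (k - n - 1) + 1 := by omega
        rw [h6]
        show (P.drop (n + 1)).getD (k - n - 1) [] = P.getD k []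
        rw [Pieri.getD_drop]; congr 1; omega
    have hT₁sd : Pieri.sd (Q.getD k []) := by
      rw [hQk]; split
      · exact Pieri.sd_dropLast hsdT₀
      · exact hsdP _ (Pieri.getD_mem' (by omega))
    have hT₁pos : ∀ x ∈ Q.getD k [], 0 < x := by
      rw [hQk]; split
      · exact fun x hx => hposT₀ x (List.mem_of_mem_dropLast hx)
      · exact hposP _ (Pieri.getD_mem' (by omega))
    -- chain on Q.drop n
    have hchainD : (Q.drop n).Chain' Pieri.rowRel := by
      rw [hQdrop, hB]
      rcases hE : P.drop (n + 1) with _ | ⟨X, xs⟩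
      · exact List.isChain_singleton _
      · rw [List.Chain', List.isChain_cons_cons]
        constructor
        · have hX : X = P.getD (n + 1) [] := by
            have := Pieri.getD_drop P (n + 1) 0
            rw [hE] at this
            simpa using this
          have hn1 : n + 1 < P.length := by
            have := congrArg List.length hE
            simp only [List.length_drop, List.length_cons] at this
            omega
          have hrel := Pieri.chain_rel hch hn1
          rw [← hT₀] at hrel
          have hXlen : X.length < c₁ := by rw [hX]; exact hlen1'
          constructor
          · rw [List.length_dropLast, hlen1]
            omega
          · intro j hj
            have hc1 := hrel.2 j (by rw [← hX]; exact hj)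
            rw [← hX] at hc1
            rw [Pieri.getD_dropLast (by rw [hlen1]; omega)]
            exact hc1
        · rw [← hE]; exact hch.drop _
    obtain ⟨hv0, hvej, jv, hjvlen, hjvval⟩ :=
      Pieri.climbQ hchainD hkn hklen hT₁sd hT₁pos hlen2 hc21
    have hW : (Q.drop n).headD [] = T₀.dropLast := by rw [hQdrop, hB]; rfl
    rw [hW] at hjvlen hjvval
    rw [List.length_dropLast, hlen1] at hjvlen
    have hjvT₀ : T₀.getD jv 0 = ejectChain ((Q.drop n).take (k - n)) ((Q.getD k []).getD (c₂ - 1) 0) := by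
      rw [← Pieri.getD_dropLast (by rw [hlen1]; omega)]
      exact hjvval
    refine Pieri.assembleFinal (T₀ := T₀) hQdef.symm hnP rfl hch hsdP ?_ ?_ ?_ ?_ hkn hklen hT₁sd hT₁pos hlen2 hc21 rfl
    · -- e < v
      rw [← hjvT₀, he]
      exact Pieri.sd_pairwise hsdT₀ (by omega) (by rw [hlen1]; omega)
    · rw [← hQdrop]; exact hvej
    · exact ⟨c₁ - 1, by omega, by rw [hlen1]; omega, rfl⟩
    · exact ⟨jv, by rw [hlen1]; omega, hjvT₀⟩
  | false =>
    set t := psiRowStep T₀ (P.drop (n + 1)) 0 false with ht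
    set B := t.1 :: P.drop (n + 1) with hB
    have hup : psiUpper P (n + 1) false = P.take (n + 1) := by simp [psiUpper]
    have hbase : psiBase P (n + 1) false = P.drop (n + 1) := by simp [psiBase]
    have hM : psiM P (n + 1) false = 0 := by simp [psiM]
    have hpsi1 : psi P (n + 1) false =
        ((psiRows (P.take n) B t.2.1 t.2.2).1, (psiRows (P.take n) B t.2.1 t.2.2).2.1) := by
      rw [Pieri.psi_eq, hup, hbase, hM, Pieri.take_succ_getD _ hnP, Pieri.psiRows_append]
      rfl
    set Q := (psiRows (P.take n) B t.2.1 t.2.2).1 with hQdef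
    have hQ1 : (psi P (n + 1) false).1 = Q := by rw [hpsi1]
    have hQ2 : (psi P (n + 1) false).2 = (psiRows (P.take n) B t.2.1 t.2.2).2.1 := by rw [hpsi1]
    rw [hQ1] at hr2len hlen2
    rw [hQ1, hQ2]
    obtain ⟨new, hstruct, hmap⟩ := Pieri.psiRows_struct (P.take n) B t.2.1 t.2.2
    have hnew : new.length = n := by
      have := congrArg List.length hmap
      simp only [List.length_map] at this
      rw [this, List.length_take]; omega
    have hQdrop : Q.drop n = B := by rw [hQdef, hstruct, ← hnew, List.drop_left]
    have hQlen : Q.length = P.length := by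
      rw [hQdef, hstruct, hB]
      simp only [List.length_append, List.length_cons, List.length_drop, hnew]
      omega
    have hrowQ : RowOf Q (k + 1) = Q.getD k [] := by simp [RowOf]
    rw [hrowQ] at hlen2
    have hklen : k < Q.length := by omega
    have hQgetlow : ∀ i < n, (Q.getD i []).length = (P.getD i []).length := by
      intro i hi
      rw [hQdef, hstruct, List.getD_append _ _ _ _ (by omega),
        Pieri.map_length_getD hmap (by omega), Pieri.getD_take hi]
    have htlen : t.1.length = c₁ := by rw [ht, Pieri.psiRowStep_length, hlen1]
    have hkn : n + 1 ≤ k := by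
      by_contra hlt
      push_neg at hlt
      rcases Nat.lt_or_ge k n with hlt2 | hge
      · have e1 : (Q.getD k []).length = (P.getD k []).length := hQgetlow _ hlt2
        have e2 := Pieri.chain_len hch (by omega : k ≤ n) hnP
        rw [← hT₀] at e2
        omega
      · have hkn' : k = n := by omega
        have h5 : Q.getD k [] = t.1 := by
          have h6 := Pieri.getD_drop Q n 0
          rw [hQdrop] at h6
          simp only [Nat.add_zero] at h6
          rw [hkn']
          exact h6.symm
        rw [h5, htlen] at hlen2
        omega
    have hn1P : n + 1 < P.length := by omega
    -- row k of Q equals row k of P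
    have hQk : Q.getD k [] = P.getD k [] := by
      have h5 : Q.getD k [] = B.getD (k - n) [] := by
        rw [← hQdrop, Pieri.getD_drop]; congr 1; omega
      rw [h5, hB]
      have h6 : k - n = (k - n - 1) + 1 := by omega
      rw [h6]
      show (P.drop (n + 1)).getD (k - n - 1) [] = P.getD k []
      rw [Pieri.getD_drop]; congr 1; omega
    have hT₁sd : Pieri.sd (Q.getD k []) := by
      rw [hQk]; exact hsdP _ (Pieri.getD_mem' (by omega))
    have hT₁pos : ∀ x ∈ Q.getD k [], 0 < x := by
      rw [hQk]; exact hposP _ (Pieri.getD_mem' (by omega))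
    have hQdrop1 : Q.drop (n + 1) = P.drop (n + 1) := by
      have : Q.drop (n + 1) = (Q.drop n).drop 1 := by rw [List.drop_drop]
      rw [this, hQdrop, hB]; rfl
    have hchainD1 : (Q.drop (n + 1)).Chain' Pieri.rowRel := by
      rw [hQdrop1]; exact hch.drop _
    obtain ⟨hv0, hvej, jv, hjvlen, hjvval⟩ :=
      Pieri.climbQ (n := n + 1) hchainD1 hkn hklen hT₁sd hT₁pos hlen2 hc21
    rw [hQdrop1] at hv0 hvej hjvlen hjvval
    have hhead : (P.drop (n + 1)).headD [] = P.getD (n + 1) [] := by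
      cases hE : P.drop (n + 1) with
      | nil =>
        exfalso
        have := congrArg List.length hE
        simp only [List.length_drop, List.length_nil] at this
        omega
      | cons X xs =>
        have h9 := Pieri.getD_drop P (n + 1) 0
        rw [hE] at h9
        simpa using h9
    rw [hhead] at hjvlen hjvval
    -- apply the manual bottom step
    have hrel := Pieri.chain_rel hch hn1P
    rw [← hT₀] at hrel
    obtain ⟨K1, K2, K3, K4⟩ := Pieri.step (R := T₀) (Bst := P.drop (n + 1)) (m₂ := 0)
      (a₂ := false) hsdT₀ hv0 hvej
      ⟨c₁ - 1, by omega, by rw [hlen1]; omega,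
        hposT₀ _ (Pieri.getD_mem (by rw [hlen1]; omega))⟩
      ⟨jv, by
          have := hrel.1
          rw [hlen1]
          have h7 : (P.getD (n + 1) []).length < c₁ := hlen1'
          omega,
        by
          have hc2 := hrel.2 jv hjvlen
          omega⟩
    rw [← ht] at K1 K2 K3 K4
    refine Pieri.assembleFinal (T₀ := T₀) hQdef.symm hnP rfl hch hsdP K1 ?_ K3 K4 (by omega) hklen hT₁sd hT₁pos hlen2 hc21 ?_
    · rw [← hB] at K2; exact K2
    · -- ejectChain over (Q.drop n).take (k - n) equals eject t.1 v₀
      have h8 : (Q.drop n).take (k - n) = t.1 :: (P.drop (n + 1)).take (k - (n + 1)) := by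
        rw [hQdrop, hB]
        have h9 : k - n = (k - (n + 1)) + 1 := by omega
        rw [h9, List.take_succ_cons]
      rw [h8]
      rfl
end

section
/- For a strictly decreasing word w containing both letters x and x−1, the word (x−1)·w is Hecke-equivalent to w·x. -/
/-- Move a letter commuting with everything in `A` from the left to the right. -/
lemma heckeComm_left (k : ℕ) (A : List ℕ) (h : ∀ a ∈ A, a + 2 ≤ k ∨ k + 2 ≤ a) :
    HeckeEquiv (k :: A) (A ++ [k]) := by
  induction A with
  | nil => exact HeckeEquiv.refl _
  | cons a A ih =>
    have h1 : HeckeEquiv (k :: a :: A) (a :: k :: A) := by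
      have := HeckeEquiv.append_congr
        (HeckeEquiv.of (HeckeRel.comm k a (h a (by simp)).symm)) (HeckeEquiv.refl A)
      simpa using this
    refine h1.trans ?_
    have := HeckeEquiv.append_congr (HeckeEquiv.refl [a]) (ih (fun b hb => h b (by simp [hb])))
    simpa using this

/-- Move a letter commuting with everything in `B` from the right to the left. -/
lemma heckeComm_right (k : ℕ) (B : List ℕ) (h : ∀ b ∈ B, b + 2 ≤ k ∨ k + 2 ≤ b) :
    HeckeEquiv (k :: B) (B ++ [k]) := by
  induction B with
  | nil => exact HeckeEquiv.refl _
  | cons b B ih =>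
    have h1 : HeckeEquiv (k :: b :: B) (b :: k :: B) := by
      have := HeckeEquiv.append_congr
        (HeckeEquiv.of (HeckeRel.comm k b (h b (by simp)).symm)) (HeckeEquiv.refl B)
      simpa using this
    refine h1.trans ?_
    have := HeckeEquiv.append_congr (HeckeEquiv.refl [b]) (ih (fun c hc => h c (by simp [hc])))
    simpa using this

lemma decreasing_decomp (w : List ℕ) (x : ℕ)
    (hw : w.Pairwise (fun p q => q < p)) (hx : x ∈ w) (hx1 : x - 1 ∈ w) (hx0 : 1 ≤ x) :
    ∃ A B, w = A ++ x :: (x - 1) :: B ∧ (∀ a ∈ A, x < a) ∧ (∀ b ∈ B, b < x - 1) := by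
  induction w with
  | nil => cases hx
  | cons h t ih =>
    have hpw := (List.pairwise_cons.mp hw).1
    have hwt := (List.pairwise_cons.mp hw).2
    rcases List.mem_cons.mp hx with rfl | hxt
    · -- x = h
      have hx1t : x - 1 ∈ t := by
        rcases List.mem_cons.mp hx1 with h1 | h1
        · omega
        · exact h1
      cases t with
      | nil => cases hx1t
      | cons y t' =>
        have hy : y = x - 1 := by
          rcases List.mem_cons.mp hx1t with h1 | h1
          · omega
          · have := (List.pairwise_cons.mp hwt).1 _ h1
            have := hpw y (by simp)
            have := hpw (x-1) (by simp [h1])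
            omega
        subst hy
        exact ⟨[], t', by simp, by simp, fun b hb => (List.pairwise_cons.mp hwt).1 _ hb⟩
    · -- x ∈ t
      have hx1t : x - 1 ∈ t := by
        rcases List.mem_cons.mp hx1 with h1 | h1
        · have := hpw x hxt; omega
        · exact h1
      obtain ⟨A, B, heq, hA, hB⟩ := ih hwt hxt hx1t
      exact ⟨h :: A, B, by simp [heq], by
        intro a ha
        rcases List.mem_cons.mp ha with rfl | ha
        · exact hpw x hxt
        · exact hA a ha, hB⟩

/-- for a strictly decreasing word `w` containing both `x` and `x-1`,
`(x-1)·w ≡_H w·x`. -/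
theorem statement11 (w : List ℕ) (x : ℕ)
    (hw : w.Chain' fun p q => q < p) (hpos : IsPosWord w)
    (hx : x ∈ w) (hx1 : x - 1 ∈ w) :
    HeckeEquiv ((x - 1) :: w) (w ++ [x]) := by
  have hx2 : 2 ≤ x := by
    have h1 := hpos _ hx1
    omega
  have hpw : w.Pairwise (fun p q => q < p) := by
    have : IsTrans ℕ (fun p q : ℕ => q < p) := ⟨fun a b c h1 h2 => by omega⟩
    exact List.isChain_iff_pairwise.mp hw
  obtain ⟨A, B, heq, hA, hB⟩ := decreasing_decomp w x hpw hx hx1 (by omega)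
  subst heq
  have hAc : ∀ a ∈ A, a + 2 ≤ x - 1 ∨ (x - 1) + 2 ≤ a := fun a ha => Or.inr (by
    have := hA a ha; omega)
  have hBc : ∀ b ∈ B, b + 2 ≤ x ∨ x + 2 ≤ b := fun b hb => Or.inl (by
    have := hB b hb; omega)
  -- step 1: (x-1) :: A ++ rest ≡ A ++ (x-1) :: rest
  have s1 : HeckeEquiv ((x - 1) :: (A ++ x :: (x - 1) :: B))
      (A ++ (x - 1) :: x :: (x - 1) :: B) := by
    have := HeckeEquiv.append_congr (heckeComm_left (x - 1) A hAc)
      (HeckeEquiv.refl (x :: (x - 1) :: B))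
    simpa using this
  -- step 2: braid
  have s2 : HeckeEquiv (A ++ (x - 1) :: x :: (x - 1) :: B)
      (A ++ x :: (x - 1) :: x :: B) := by
    have hb : HeckeRel [x - 1, x, x - 1] [x, x - 1, x] := by
      have := HeckeRel.braid (x - 1)
      have hxe : x - 1 + 1 = x := by omega
      rwa [hxe] at this
    have := HeckeEquiv.append_congr (HeckeEquiv.refl A)
      (HeckeEquiv.append_congr (HeckeEquiv.of hb) (HeckeEquiv.refl B))
    simpa using this
  -- step 3: move x through B
  have s3 : HeckeEquiv (A ++ x :: (x - 1) :: x :: B)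
      (A ++ x :: (x - 1) :: B ++ [x]) := by
    have := HeckeEquiv.append_congr (HeckeEquiv.refl (A ++ [x, x - 1]))
      (heckeComm_right x B hBc)
    simpa using this
  have := (s1.trans s2).trans s3
  simpa using this
end

section
/- For a strictly decreasing word w containing the letter x but not containing the letter x−1, the word w is Hecke-equivalent to w·x. -/
lemma heckeEquiv_comm_past (x : ℕ) :
    ∀ v : List ℕ, (∀ y ∈ v, y + 2 ≤ x) → HeckeEquiv (v ++ [x]) (x :: v)
  | [], _ => HeckeEquiv.refl _
  | y :: v, h => by
    have h1 : HeckeEquiv (y :: (v ++ [x])) (y :: (x :: v)) :=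
      HeckeEquiv.append_congr (a := [y]) (b := [y]) (HeckeEquiv.refl _)
        (heckeEquiv_comm_past x v (fun z hz => h z (List.mem_cons_of_mem _ hz)))
    have h2 : HeckeEquiv ([y, x] ++ v) ([x, y] ++ v) :=
      HeckeEquiv.append_congr
        (HeckeEquiv.of (HeckeRel.comm y x (Or.inl (h y List.mem_cons_self))))
        (HeckeEquiv.refl v)
    exact HeckeEquiv.trans h1 h2

/-- for a strictly decreasing word `w` containing `x` but not `x-1`,
`w ≡_H w·x`. -/
theorem statement12 (w : List ℕ) (x : ℕ)
    (hw : w.Chain' fun p q => q < p) (hpos : IsPosWord w)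
    (hx : x ∈ w) (hx1 : x - 1 ∉ w) :
    HeckeEquiv w (w ++ [x]) := by
  induction w with
  | nil => cases hx
  | cons a w ih =>
      have hpw : (a :: w).Pairwise (fun p q => q < p) :=
        (List.isChain_iff_pairwise).mp hw
      rcases List.mem_cons.mp hx with rfl | hx'
      · -- a = x
        have hlt : ∀ y ∈ w, y < x := fun y hy => (List.pairwise_cons.mp hpw).1 y hy
        have hsmall : ∀ y ∈ w, y + 2 ≤ x := by
          intro y hy
          have h1 := hlt y hy
          have h2 : y ≠ x - 1 := fun e => hx1 (e ▸ List.mem_cons_of_mem _ hy)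
          omega
        have hc : HeckeEquiv (w ++ [x]) (x :: w) := heckeEquiv_comm_past x w hsmall
        have h1 : HeckeEquiv (x :: (w ++ [x])) (x :: (x :: w)) :=
          HeckeEquiv.append_congr (a := [x]) (b := [x]) (HeckeEquiv.refl _) hc
        have h2 : HeckeEquiv ([x, x] ++ w) ([x] ++ w) :=
          HeckeEquiv.append_congr (HeckeEquiv.of (HeckeRel.idem x)) (HeckeEquiv.refl w)
        exact HeckeEquiv.symm (HeckeEquiv.trans h1 h2)
      · have ih' : HeckeEquiv w (w ++ [x]) :=
          ih (hw.tail) (fun y hy => hpos y (List.mem_cons_of_mem _ hy)) hx'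
            (fun h => hx1 (List.mem_cons_of_mem _ h))
        exact HeckeEquiv.append_congr (a := [a]) (b := [a]) (HeckeEquiv.refl _) ih'
end

section
/- Well-definedness of the forward insertion: given a decreasing tableau P and a positive integer m, the output tableau P' of the insertion Φ(P, m) is a decreasing tableau, and its shape equals shape(P) if the output flag α = 0, and shape(P) plus one new removable cell s if α = 1. -/
section Aux13

/-- Strictly decreasing list, via indices. -/
def SD (R : List ℕ) : Prop :=
  ∀ p q, (hp : p < q) → (hq : q < R.length) → R[q] < R[p]'(Nat.lt_trans hp hq)

lemma chain'_iff_SD (R : List ℕ) : R.Chain' (fun x y => y < x) ↔ SD R := by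
  have : IsTrans ℕ (fun x y : ℕ => y < x) := ⟨fun a b c h1 h2 => Nat.lt_trans h2 h1⟩
  unfold List.Chain'; rw [List.isChain_iff_pairwise, List.pairwise_iff_getElem]
  constructor
  · intro h p q hp hq; exact h p q (Nat.lt_trans hp hq) hq hp
  · intro h i j hi hj hij; exact h i j hij hj

lemma SD_inj {R : List ℕ} (hR : SD R) {k k' : ℕ} (hk : k < R.length) (hk' : k' < R.length)
    (h : R[k] = R[k']) : k = k' := by
  rcases Nat.lt_trichotomy k k' with h1 | h1 | h1
  · have := hR k k' h1 hk'; omega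
  · exact h1
  · have := hR k' k h1 hk; omega

/-- Specification of an insertion of `v` into a strictly decreasing row `S`,
producing `T`, at position `p`. -/
structure InsSpec (v : ℕ) (S T : List ℕ) (p : ℕ) : Prop where
  hp : p ≤ S.length
  hlen : T.length = if p = S.length then S.length + 1 else S.length
  hget : ∀ k, k < T.length → T.getD k 0 = if k = p then v else S.getD k 0
  hbefore : ∀ k, k < p → v < S.getD k 0
  hafter : p < S.length → S.getD p 0 ≤ v

/-- `insRow v S`: the first row of the result of inserting `v` into a tableau
with first row `S`. -/
def insRow (v : ℕ) (S : List ℕ) : List ℕ :=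
  match (S.filter fun y => decide (y ≤ v)).max? with
  | none => S ++ [v]
  | some w => replaceVal S w v

lemma replaceVal_length (R : List ℕ) (a b : ℕ) : (replaceVal R a b).length = R.length :=
  List.length_map _

lemma replace_getD {R : List ℕ} (hR : SD R) {n1 : ℕ} (hmem : n1 ∈ R) (N : ℕ)
    {k : ℕ} (hk : k < R.length) :
    (replaceVal R n1 N).getD k 0 = if k = R.idxOf n1 then N else R.getD k 0 := by
  have hj : R.idxOf n1 < R.length := List.idxOf_lt_length_iff.2 hmem
  have hRj : R[R.idxOf n1] = n1 := List.getElem_idxOf hj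
  have h1 : (replaceVal R n1 N).getD k 0 = if R[k] = n1 then N else R[k] := by
    rw [List.getD_eq_getElem _ _ (by rwa [replaceVal_length])]
    simp [replaceVal]
  rw [h1, List.getD_eq_getElem _ _ hk]
  by_cases h : k = R.idxOf n1
  · subst h; simp [hRj]
  · have : R[k] ≠ n1 := fun hc => h (SD_inj hR hk hj (by rw [hc, hRj]))
    simp [this, h]

lemma insRow_spec (v : ℕ) {S : List ℕ} (hS : SD S) :
    ∃ p, InsSpec v S (insRow v S) p := by
  unfold insRow
  cases hm : (S.filter fun y => decide (y ≤ v)).max? with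
  | none =>
    have hemp : ∀ x ∈ S, ¬ x ≤ v := by
      intro x hx
      have := List.max?_eq_none_iff.1 hm
      have := List.filter_eq_nil_iff.1 this x hx
      simpa using this
    refine ⟨S.length, ⟨le_refl _, by simp, ?_, ?_, by omega⟩⟩
    · intro k hk
      simp only [List.length_append, List.length_singleton] at hk
      by_cases h : k = S.length
      · subst h
        rw [List.getD_eq_getElem _ _ (by simp), if_pos rfl]
        rw [List.getElem_append]
        simp
      · rw [if_neg h, List.getD_append _ _ _ _ (by omega)]
    · intro k hk
      have hk' : k < S.length := hk
      rw [List.getD_eq_getElem _ _ hk']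
      have := hemp _ (List.getElem_mem hk')
      omega
  | some w =>
    have hw := List.max?_eq_some_iff'.1 hm
    obtain ⟨hwmem, hwmax⟩ := hw
    rw [List.mem_filter] at hwmem
    obtain ⟨hwS, hwv⟩ := hwmem
    have hwv : w ≤ v := by simpa using hwv
    have hmax : ∀ x ∈ S, x ≤ v → x ≤ w := by
      intro x hx hxv
      exact hwmax x (List.mem_filter.2 ⟨hx, by simpa using hxv⟩)
    have hp : S.idxOf w < S.length := List.idxOf_lt_length_iff.2 hwS
    have hSp : S[S.idxOf w] = w := List.getElem_idxOf hp
    refine ⟨S.idxOf w, ⟨le_of_lt hp, ?_, ?_, ?_, ?_⟩⟩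
    · rw [replaceVal_length, if_neg (by omega)]
    · intro k hk
      rw [replaceVal_length] at hk
      rw [replace_getD hS hwS v hk]
    · intro k hk
      have hk' : k < S.length := lt_trans hk hp
      rw [List.getD_eq_getElem _ _ hk']
      have h1 : w < S[k] := by
        have := hS k (S.idxOf w) hk hp
        omega
      by_contra hc
      have := hmax _ (List.getElem_mem hk') (by omega)
      omega
    · intro _
      rw [List.getD_eq_getElem _ _ hp, hSp]; exact hwv

lemma spec_SD {v : ℕ} {S T : List ℕ} {p : ℕ} (hS : SD S) (hsp : InsSpec v S T p) : SD T := by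
  obtain ⟨hp, hlen, hget, hbefore, hafter⟩ := hsp
  intro a b hab hb
  have hTlen : T.length ≤ S.length + 1 := by rw [hlen]; split <;> omega
  have hbS : b = p ∨ b < S.length := by
    rw [hlen] at hb; split at hb <;> omega
  have haS : a < S.length := by
    rcases hbS with h | h
    · rcases h with rfl; rcases Nat.lt_or_ge a S.length with h | h
      · exact h
      · exfalso; rw [hlen] at hb; omega
    · omega
  have hga := hget a (Nat.lt_trans hab hb)
  have hgb := hget b hb
  rw [List.getD_eq_getElem _ _ (Nat.lt_trans hab hb)] at hga
  rw [List.getD_eq_getElem _ _ hb] at hgb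
  rw [hga, hgb]
  by_cases h1 : a = p
  · rw [if_pos h1, if_neg (by omega)]
    have hbS' : b < S.length := by rcases hbS with h | h; omega; exact h
    have hpS : p < S.length := h1 ▸ haS
    have h2 := hS p b (h1 ▸ hab) hbS'
    have h3 := hafter hpS
    rw [List.getD_eq_getElem _ _ hpS] at h3
    rw [List.getD_eq_getElem _ _ hbS']
    omega
  · rw [if_neg h1]
    by_cases h2 : b = p
    · subst h2
      rw [if_pos rfl]
      exact hbefore a hab
    · rw [if_neg h2]
      have hbS' : b < S.length := by rcases hbS with h | h; omega; exact h
      rw [List.getD_eq_getElem _ _ haS, List.getD_eq_getElem _ _ hbS']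
      exact hS a b hab hbS'

lemma spec_pos {v : ℕ} {S T : List ℕ} {p : ℕ} (hsp : InsSpec v S T p)
    (hS : ∀ x ∈ S, 0 < x) (hv : 0 < v) : ∀ x ∈ T, 0 < x := by
  obtain ⟨hp, hlen, hget, _, _⟩ := hsp
  intro x hx
  obtain ⟨k, hk, rfl⟩ := List.mem_iff_getElem.1 hx
  have := hget k hk
  rw [List.getD_eq_getElem _ _ hk] at this
  rw [this]
  split
  · exact hv
  · next h =>
    have hkS : k < S.length := by rw [hlen] at hk; split at hk <;> omega
    rw [List.getD_eq_getElem _ _ hkS]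
    exact hS _ (List.getElem_mem hkS)

lemma spec_ne_nil {v : ℕ} {S T : List ℕ} {p : ℕ} (hsp : InsSpec v S T p) : T ≠ [] := by
  have h0 := hsp.hlen
  have h1 := hsp.hp
  have : 0 < T.length := by rw [h0]; split <;> omega
  exact List.length_pos_iff.1 this

end Aux13
section Aux13b

lemma phiRows_fst (N : ℕ) (P : List (List ℕ)) :
    ∃ t, (phiRows N P).1 = insRow N (P.headD []) :: t := by
  cases P with
  | nil =>
    refine ⟨[], ?_⟩
    simp [phiRows, insRow]
  | cons R rest =>
    simp only [phiRows, List.headD_cons, insRow]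
    cases hm : (R.filter fun y => decide (y ≤ N)).max? with
    | none => exact ⟨rest, rfl⟩
    | some n1 =>
      dsimp only
      split
      · exact ⟨_, rfl⟩
      · split
        · exact ⟨_, rfl⟩
        · split
          · exact ⟨_, rfl⟩
          · split
            · exact ⟨_, rfl⟩
            · exact ⟨_, rfl⟩

lemma IDT_cons {R : List ℕ} {rest : List (List ℕ)} (h : IsDecreasingTableau (R :: rest)) :
    R ≠ [] ∧ (∀ x ∈ R, 0 < x) ∧ SD R ∧
    ((rest.headD []).length ≤ R.length ∧
      ∀ j, (hj : j < (rest.headD []).length) → (rest.headD []).getD j 0 < R.getD j 0) ∧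
    IsDecreasingTableau rest := by
  obtain ⟨h1, h2, h3, h4⟩ := h
  unfold List.Chain' at h4; rw [List.isChain_cons] at h4
  refine ⟨h1 _ (by simp), h2 _ (by simp), (chain'_iff_SD R).1 (h3 _ (by simp)), ⟨?_, ?_⟩, ?_, ?_, ?_, h4.2⟩
  · cases rest with
    | nil => simp
    | cons S rest' =>
      have := h4.1 S (by simp)
      simpa using this.1
  · cases rest with
    | nil => simp
    | cons S rest' =>
      have := h4.1 S (by simp)
      intro j hj
      exact this.2 j (by simpa using hj)
  · intro S hS; exact h1 _ (List.mem_cons_of_mem _ hS)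
  · intro S hS; exact h2 _ (List.mem_cons_of_mem _ hS)
  · intro S hS; exact h3 _ (List.mem_cons_of_mem _ hS)

lemma eject_base {S : List ℕ} {rest' : List (List ℕ)} {z : ℕ}
    (h1 : z ∈ S) (h2 : z - 1 ∉ S) : ejectableB (S :: rest') z = true := by
  simp [ejectableB, h1, h2]

lemma pred_pos {S : List ℕ} (hS : SD S) {j : ℕ} (hj : j < S.length) {z : ℕ}
    (hz : S[j] = z) (hz0 : 0 < z) (hmem : z - 1 ∈ S) :
    ∃ hj1 : j + 1 < S.length, S[j+1] = z - 1 := by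
  obtain ⟨q, hq, hqv⟩ := List.mem_iff_getElem.1 hmem
  have hqj : j < q := by
    rcases Nat.lt_trichotomy q j with h | h | h
    · have h5 := hS q j h hj
      rw [hz, hqv] at h5; omega
    · subst h; rw [hz] at hqv; omega
    · exact h
  have hq1 : q = j + 1 := by
    by_contra hc
    have hj1 : j + 1 < q := by omega
    have h1 := hS j (j+1) (by omega) (by omega)
    have h2 := hS (j+1) q hj1 hq
    rw [hz] at h1; rw [hqv] at h2; omega
  subst hq1
  exact ⟨hq, hqv⟩

lemma shapePlus_cons (x : ℕ) (sh : List ℕ) (r : ℕ) (hr : 1 ≤ r) :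
    shapePlus (x :: sh) (r + 1) = x :: shapePlus sh r := by
  obtain ⟨r', rfl⟩ : ∃ r', r = r' + 1 := ⟨r - 1, by omega⟩
  unfold shapePlus
  by_cases h : r' + 1 ≤ sh.length
  · rw [if_pos (by simp; omega), if_pos h]
    simp [List.set_cons_succ, List.getD_cons_succ]
  · rw [if_neg (by simp; omega), if_neg h]
    simp

lemma isRemovable_cons (R' : List ℕ) (T : List (List ℕ)) (r c : ℕ)
    (h : IsRemovable T r c) : IsRemovable (R' :: T) (r + 1) c := by
  obtain ⟨h1, h2, h3, h4, h5⟩ := h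
  obtain ⟨r', rfl⟩ : ∃ r', r = r' + 1 := ⟨r - 1, by omega⟩
  refine ⟨by omega, by simp; omega, h3, ?_, ?_⟩
  · show (RowOf (R' :: T) (r' + 2)).length = c
    rw [show RowOf (R' :: T) (r' + 2) = RowOf T (r' + 1) from ?_]
    · exact h4
    · simp [RowOf, List.getD_cons_succ]
  · show (RowOf (R' :: T) (r' + 3)).length < c
    rw [show RowOf (R' :: T) (r' + 3) = RowOf T (r' + 2) from ?_]
    · exact h5
    · simp [RowOf, List.getD_cons_succ]

end Aux13b
section Aux13c

lemma dom_step {R S : List ℕ} {N n1 v : ℕ}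
    (hR : SD R) (hS : SD S)
    (hlenRS : S.length ≤ R.length)
    (hpt : ∀ k, (hk : k < S.length) → S.getD k 0 < R.getD k 0)
    (hmem : n1 ∈ R) (hn1N : n1 ≤ N)
    (hvn1 : v ≤ n1) (hvN : v < N)
    (noz : ∀ hj : R.idxOf n1 < S.length,
      ¬(v < S[R.idxOf n1] ∧ S[R.idxOf n1] < n1))
    {T : List ℕ} {p : ℕ} (hsp : InsSpec v S T p) :
    T.length ≤ (replaceVal R n1 N).length ∧
      ∀ k, (hk : k < T.length) → T.getD k 0 < (replaceVal R n1 N).getD k 0 := by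
  have hj : R.idxOf n1 < R.length := List.idxOf_lt_length_iff.2 hmem
  have hRj : R[R.idxOf n1] = n1 := List.getElem_idxOf hj
  set j := R.idxOf n1 with hjdef
  -- p ≤ j
  have hpj : p ≤ j := by
    by_contra hc
    have hjp : j < p := by omega
    have hjS : j < S.length := by have := hsp.hp; omega
    have hb := hsp.hbefore j hjp
    rw [List.getD_eq_getElem _ _ hjS] at hb
    have h1 := hpt j hjS
    rw [List.getD_eq_getElem _ _ hjS, List.getD_eq_getElem _ _ (by omega : j < R.length), hRj] at h1
    exact noz hjS ⟨hb, h1⟩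
  have hTlen : T.length ≤ R.length := by
    have := hsp.hlen
    have := hsp.hp
    rw [hsp.hlen]
    split
    · next h => omega
    · omega
  constructor
  · rw [replaceVal_length]; exact hTlen
  · intro k hk
    have hkR : k < R.length := lt_of_lt_of_le hk hTlen
    rw [replace_getD hR hmem N hkR, hsp.hget k hk]
    by_cases h1 : k = p
    · rw [if_pos h1]
      by_cases h2 : k = j
      · rw [if_pos h2]; exact hvN
      · rw [if_neg h2]
        have hkj : k < j := by omega
        have h3 := hR k j hkj hj
        rw [hRj] at h3
        rw [List.getD_eq_getElem _ _ hkR]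
        omega
    · rw [if_neg h1]
      have hkS : k < S.length := by
        have := hsp.hlen
        rw [this] at hk
        split at hk
        · next h => omega
        · omega
      have h3 := hpt k hkS
      by_cases h2 : k = j
      · rw [if_pos h2]
        have hjS : j < S.length := h2 ▸ hkS
        have h3' := hpt j hjS
        rw [List.getD_eq_getElem _ _ hjS, List.getD_eq_getElem _ _ hj, hRj] at h3'
        rw [h2, List.getD_eq_getElem _ _ hjS]
        omega
      · rw [if_neg h2]
        exact h3

lemma combine {R' R0 : List ℕ} {rest : List (List ℕ)} {v : ℕ}
    (hlen : R'.length = R0.length) (hne : R' ≠ []) (hpos : ∀ x ∈ R', 0 < x)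
    (hSDR' : SD R')
    (hdom : ((phiRows v rest).1.headD []).length ≤ R'.length ∧
      ∀ k, (hk : k < ((phiRows v rest).1.headD []).length) →
        ((phiRows v rest).1.headD []).getD k 0 < R'.getD k 0)
    (IH : IsDecreasingTableau (phiRows v rest).1 ∧
      ((phiRows v rest).2.2.2 = false → shape (phiRows v rest).1 = shape rest) ∧
      ((phiRows v rest).2.2.2 = true →
        IsRemovable (phiRows v rest).1 (phiRows v rest).2.1 (phiRows v rest).2.2.1 ∧
        shape (phiRows v rest).1 = shapePlus (shape rest) (phiRows v rest).2.1)) :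
    IsDecreasingTableau (R' :: (phiRows v rest).1) ∧
    ((phiRows v rest).2.2.2 = false →
      shape (R' :: (phiRows v rest).1) = shape (R0 :: rest)) ∧
    ((phiRows v rest).2.2.2 = true →
      IsRemovable (R' :: (phiRows v rest).1) ((phiRows v rest).2.1 + 1) (phiRows v rest).2.2.1 ∧
      shape (R' :: (phiRows v rest).1) = shapePlus (shape (R0 :: rest)) ((phiRows v rest).2.1 + 1)) := by
  obtain ⟨hT, hF, hA⟩ := IH
  obtain ⟨ht1, ht2, ht3, ht4⟩ := hT
  obtain ⟨t, hhead⟩ := phiRows_fst v rest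
  have hhd : (phiRows v rest).1.headD [] = insRow v (rest.headD []) := by rw [hhead]; rfl
  refine ⟨⟨?_, ?_, ?_, ?_⟩, ?_, ?_⟩
  · intro S hS
    rcases List.mem_cons.1 hS with rfl | h
    · exact hne
    · exact ht1 _ h
  · intro S hS
    rcases List.mem_cons.1 hS with rfl | h
    · exact hpos
    · exact ht2 _ h
  · intro S hS
    rcases List.mem_cons.1 hS with rfl | h
    · exact (chain'_iff_SD _).2 hSDR'
    · exact ht3 _ h
  · unfold List.Chain'; rw [List.isChain_cons]
    refine ⟨?_, ht4⟩
    intro b hb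
    rw [hhead] at hb
    simp only [List.head?_cons, Option.mem_def, Option.some.injEq] at hb
    subst hb
    have h1 : insRow v (rest.headD []) = (phiRows v rest).1.headD [] := hhd.symm
    rw [h1]
    exact ⟨hdom.1, fun j hj => hdom.2 j hj⟩
  · intro hfalse
    have := hF hfalse
    simp only [shape, List.map_cons] at this ⊢
    rw [hlen, this]
  · intro htrue
    obtain ⟨hrem, hsh⟩ := hA htrue
    have hr1 : 1 ≤ (phiRows v rest).2.1 := hrem.1
    constructor
    · exact isRemovable_cons _ _ _ _ hrem
    · simp only [shape, List.map_cons] at hsh ⊢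
      rw [shapePlus_cons _ _ _ hr1, hlen, hsh]

end Aux13c
section Aux13d

lemma IDT_head {rest : List (List ℕ)} (h : IsDecreasingTableau rest) :
    SD (rest.headD []) ∧ ∀ x ∈ rest.headD [], 0 < x := by
  cases rest with
  | nil =>
    refine ⟨fun p q hp hq => ?_, by simp⟩
    simp at hq
  | cons S r =>
    obtain ⟨_, h2, h3, _⟩ := h
    exact ⟨(chain'_iff_SD S).1 (h3 S (by simp)), h2 S (by simp)⟩

lemma noz_IR {R S : List ℕ} {rest' : List (List ℕ)} (hS : SD S) (hSpos : ∀ x ∈ S, 0 < x)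
    (hpt : ∀ k, (hk : k < S.length) → S.getD k 0 < R.getD k 0)
    {j n1 n2 v : ℕ} (hjS : j < S.length)
    (hn2 : n2 = R.getD (j+1) 0)
    (hv2 : n2 ≤ v) (hvz : v < S[j]) (hzn1 : S[j] < n1) :
    ∃ y ∈ (S.filter fun x =>
      ejectableB (S :: rest') x && decide (n2 < x) && decide (x < n1)), v < y := by
  have hmemz : S[j] ∈ S := List.getElem_mem hjS
  have hzpos : 0 < S[j] := hSpos _ hmemz
  by_cases hz1 : S[j] - 1 ∈ S
  · exfalso
    obtain ⟨hj1, hj1v⟩ := pred_pos hS hjS rfl hzpos hz1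
    have h1 := hpt (j+1) hj1
    rw [List.getD_eq_getElem _ _ hj1, hj1v, ← hn2] at h1
    omega
  · refine ⟨S[j], List.mem_filter.2 ⟨hmemz, ?_⟩, hvz⟩
    have he := eject_base hmemz hz1 (rest' := rest')
    simp only [he, Bool.true_and, Bool.and_eq_true, decide_eq_true_eq]
    omega

end Aux13d
section Aux13e

lemma branch_case {R : List ℕ} {rest : List (List ℕ)} {N n1 v : ℕ}
    (hN : 0 < N) (hv : 0 < v)
    (hRpos : ∀ x ∈ R, 0 < x) (hRSD : SD R)
    (hlenS : (rest.headD []).length ≤ R.length)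
    (hptS : ∀ j, (hj : j < (rest.headD []).length) →
      (rest.headD []).getD j 0 < R.getD j 0)
    (hSSD : SD (rest.headD []))
    (hm : (R.filter fun y => decide (y ≤ N)).max? = some n1)
    (hR'SD : SD (replaceVal R n1 N)) (hR'pos : ∀ x ∈ replaceVal R n1 N, 0 < x)
    (hR'ne : replaceVal R n1 N ≠ [])
    (hvn1 : v ≤ n1) (hvN : v < N)
    (noz : ∀ hj : R.idxOf n1 < (rest.headD []).length,
      ¬(v < (rest.headD [])[R.idxOf n1] ∧ (rest.headD [])[R.idxOf n1] < n1))
    (IH : IsDecreasingTableau (phiRows v rest).1 ∧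
      ((phiRows v rest).2.2.2 = false → shape (phiRows v rest).1 = shape rest) ∧
      ((phiRows v rest).2.2.2 = true →
        IsRemovable (phiRows v rest).1 (phiRows v rest).2.1 (phiRows v rest).2.2.1 ∧
        shape (phiRows v rest).1 = shapePlus (shape rest) (phiRows v rest).2.1)) :
    IsDecreasingTableau (replaceVal R n1 N :: (phiRows v rest).1) ∧
    ((phiRows v rest).2.2.2 = false →
      shape (replaceVal R n1 N :: (phiRows v rest).1) = shape (R :: rest)) ∧
    ((phiRows v rest).2.2.2 = true →
      IsRemovable (replaceVal R n1 N :: (phiRows v rest).1)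
        ((phiRows v rest).2.1 + 1) (phiRows v rest).2.2.1 ∧
      shape (replaceVal R n1 N :: (phiRows v rest).1) =
        shapePlus (shape (R :: rest)) ((phiRows v rest).2.1 + 1)) := by
  have hsm := List.max?_eq_some_iff'.1 hm
  have hn1R : n1 ∈ R := (List.mem_filter.1 hsm.1).1
  have hn1N : n1 ≤ N := by
    have := (List.mem_filter.1 hsm.1).2; simpa using this
  have hdom : ((phiRows v rest).1.headD []).length ≤ (replaceVal R n1 N).length ∧
      ∀ k, (hk : k < ((phiRows v rest).1.headD []).length) →
        ((phiRows v rest).1.headD []).getD k 0 < (replaceVal R n1 N).getD k 0 := by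
    obtain ⟨t, hhead⟩ := phiRows_fst v rest
    obtain ⟨p, hsp⟩ := insRow_spec v hSSD
    have hd2 := dom_step hRSD hSSD hlenS hptS hn1R hn1N hvn1 hvN noz hsp
    rw [hhead]
    simpa only [List.headD_cons] using hd2
  exact combine (replaceVal_length R n1 N) hR'ne hR'pos hR'SD hdom IH

lemma SD_append_last {R : List ℕ} {v : ℕ} (hR : SD R) (hall : ∀ x ∈ R, v < x) :
    SD (R ++ [v]) := by
  intro p q hpq hq
  rw [List.length_append, List.length_singleton] at hq
  have hpR : p < R.length := by
    by_contra hc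
    omega
  simp only [List.getElem_append]
  rw [dif_pos hpR]
  by_cases hqR : q < R.length
  · rw [dif_pos hqR]
    exact hR p q hpq hqR
  · rw [dif_neg hqR]
    simp only [List.getElem_singleton]
    exact hall _ (List.getElem_mem hpR)

lemma headD_getD (rest : List (List ℕ)) : rest.getD 0 [] = rest.headD [] := by
  cases rest <;> simp

lemma phiRows_good (P : List (List ℕ)) : ∀ N, 0 < N → IsDecreasingTableau P →
    IsDecreasingTableau (phiRows N P).1 ∧
    ((phiRows N P).2.2.2 = false → shape (phiRows N P).1 = shape P) ∧
    ((phiRows N P).2.2.2 = true →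
      IsRemovable (phiRows N P).1 (phiRows N P).2.1 (phiRows N P).2.2.1 ∧
      shape (phiRows N P).1 = shapePlus (shape P) (phiRows N P).2.1) := by
  induction P with
  | nil =>
    intro N hN _
    refine ⟨⟨?_, ?_, ?_, ?_⟩, ?_, ?_⟩ <;> simp [phiRows, List.Chain']
    · omega
    · refine ⟨?_, ?_⟩
      · refine ⟨le_refl 1, by simp, le_refl 1, ?_, ?_⟩
        · simp [RowOf]
        · simp [RowOf]
      · simp [shape, shapePlus]
  | cons R rest ih =>
    intro N hN hP
    obtain ⟨hRne, hRpos, hRSD, ⟨hlenS, hptS⟩, hrest⟩ := IDT_cons hP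
    obtain ⟨hSSD, hSpos⟩ := IDT_head hrest
    simp only [phiRows]
    cases hm : (R.filter fun y => decide (y ≤ N)).max? with
    | none =>
      dsimp only
      have hemp : ∀ x ∈ R, N < x := by
        intro x hx
        have h := List.filter_eq_nil_iff.1 (List.max?_eq_none_iff.1 hm) x hx
        simp at h; omega
      refine ⟨⟨?_, ?_, ?_, ?_⟩, by simp, fun _ => ⟨?_, ?_⟩⟩
      · intro S hS
        rcases List.mem_cons.1 hS with rfl | h
        · simp
        · exact hrest.1 _ h
      · intro S hS
        rcases List.mem_cons.1 hS with rfl | h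
        · intro x hx
          rcases List.mem_append.1 hx with h' | h'
          · exact hRpos _ h'
          · simp at h'; omega
        · exact hrest.2.1 _ h
      · intro S hS
        rcases List.mem_cons.1 hS with rfl | h
        · exact (chain'_iff_SD _).2 (SD_append_last hRSD hemp)
        · exact hrest.2.2.1 _ h
      · unfold List.Chain'; rw [List.isChain_cons]
        refine ⟨?_, hrest.2.2.2⟩
        intro b hb
        have hbeq : b = rest.headD [] := by
          cases rest with
          | nil => simp at hb
          | cons S0 r' => simp at hb; simp [hb]
        subst hbeq
        constructor
        · rw [List.length_append, List.length_singleton]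
          omega
        · intro k hk
          rw [List.getD_append _ _ _ _ (by omega)]
          exact hptS k hk
      · refine ⟨le_refl 1, by simp, by omega, ?_, ?_⟩
        · show (RowOf ((R ++ [N]) :: rest) 1).length = R.length + 1
          simp [RowOf]
        · show (RowOf ((R ++ [N]) :: rest) 2).length < R.length + 1
          simp only [RowOf]
          rw [show (2:ℕ) - 1 = 0 + 1 from rfl, List.getD_cons_succ, headD_getD]
          omega
      · simp only [shape, List.map_cons, shapePlus]
        rw [if_pos (by simp)]
        simp
    | some n1 =>
      have hsm := List.max?_eq_some_iff'.1 hm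
      have hn1R : n1 ∈ R := (List.mem_filter.1 hsm.1).1
      have hn1N : n1 ≤ N := by have := (List.mem_filter.1 hsm.1).2; simpa using this
      have hj : R.idxOf n1 < R.length := List.idxOf_lt_length_iff.2 hn1R
      have hRj : R[R.idxOf n1] = n1 := List.getElem_idxOf hj
      have hRjD : R.getD (R.idxOf n1) 0 = n1 := by
        rw [List.getD_eq_getElem _ _ hj, hRj]
      have hins : insRow N R = replaceVal R n1 N := by unfold insRow; rw [hm]
      obtain ⟨p0, spec0⟩ := insRow_spec N hRSD
      rw [hins] at spec0
      have hR'SD : SD (replaceVal R n1 N) := spec_SD hRSD spec0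
      have hR'pos := spec_pos spec0 hRpos hN
      have hR'ne := spec_ne_nil spec0
      dsimp only
      split
      · next hd => -- dummy
        simp only [Bool.and_eq_true, decide_eq_true_eq] at hd
        obtain ⟨hd1, hd2⟩ := hd
        have hd2' : N - 1 ∈ R := by simpa using hd2
        refine branch_case hN (hRpos _ hd2') hRpos hRSD hlenS hptS hSSD hm
          hR'SD hR'pos hR'ne (by omega) (by omega) ?_ (ih _ (hRpos _ hd2') hrest)
        intro hjS ⟨h1, h2⟩
        omega
      · next hd =>
        split
        · next hdr => -- DR
          simp only [Bool.and_eq_true, decide_eq_true_eq] at hdr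
          refine branch_case hN (hRpos _ hn1R) hRpos hRSD hlenS hptS hSSD hm
            hR'SD hR'pos hR'ne (le_refl n1) hdr.1 ?_ (ih _ (hRpos _ hn1R) hrest)
          intro hjS ⟨h1, h2⟩
          omega
        · next hdr =>
          split
          · next y hy => -- IR1
            simp only [largestEjectableBetween] at hy
            have hysp := List.max?_eq_some_iff'.1 hy
            have hymem := List.mem_filter.1 hysp.1
            have hyS : y ∈ rest.headD [] := hymem.1
            have hycond := hymem.2
            simp only [Bool.and_eq_true, decide_eq_true_eq] at hycond
            obtain ⟨⟨hyej, hyn2⟩, hyn1⟩ := hycond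
            refine branch_case hN (hSpos _ hyS) hRpos hRSD hlenS hptS hSSD hm
              hR'SD hR'pos hR'ne (by omega) (by omega) ?_ (ih _ (hSpos _ hyS) hrest)
            intro hjS ⟨h1, h2⟩
            cases rest with
            | nil => simp at hjS
            | cons S0 r' =>
              simp only [List.headD_cons] at hjS h1 h2 hSSD hSpos hptS hy hysp
              obtain ⟨y', hy'mem, hvy'⟩ :=
                noz_IR hSSD hSpos hptS hjS rfl (by omega) h1 h2
              have := hysp.2 y' hy'mem
              omega
          · next hy =>
            split
            · next h2 => -- T2
              refine ⟨⟨?_, ?_, ?_, ?_⟩, fun _ => ?_, by simp⟩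
              · intro S hS
                rcases List.mem_cons.1 hS with rfl | h
                · exact hR'ne
                · exact hrest.1 _ h
              · intro S hS
                rcases List.mem_cons.1 hS with rfl | h
                · exact hR'pos
                · exact hrest.2.1 _ h
              · intro S hS
                rcases List.mem_cons.1 hS with rfl | h
                · exact (chain'_iff_SD _).2 hR'SD
                · exact hrest.2.2.1 _ h
              · unfold List.Chain'; rw [List.isChain_cons]
                refine ⟨?_, hrest.2.2.2⟩
                intro b hb
                have hbeq : b = rest.headD [] := by
                  cases rest with
                  | nil => simp at hb
                  | cons S0 r' => simp at hb; simp [hb]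
                subst hbeq
                constructor
                · rw [replaceVal_length]; exact hlenS
                · intro k hk
                  have hkR : k < R.length := by omega
                  rw [replace_getD hRSD hn1R N hkR]
                  by_cases hkj : k = R.idxOf n1
                  · rw [if_pos hkj]
                    have := hptS k hk
                    rw [hkj, hRjD] at this
                    rw [hkj]
                    omega
                  · rw [if_neg hkj]
                    exact hptS k hk
              · simp only [shape, List.map_cons, replaceVal_length]
            · next h2 => -- IR2
              have hn2lt : R.getD (R.idxOf n1 + 1) 0 < n1 := by
                by_cases hh : R.idxOf n1 + 1 < R.length
                · have := hRSD (R.idxOf n1) (R.idxOf n1 + 1) (by omega) hh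
                  rw [hRj] at this
                  rw [List.getD_eq_getElem _ _ hh]
                  exact this
                · exfalso
                  rw [List.getD_eq_default _ _ (by omega)] at h2
                  exact h2 rfl
              have hn2pos : 0 < R.getD (R.idxOf n1 + 1) 0 := by omega
              refine branch_case hN hn2pos hRpos hRSD hlenS hptS hSSD hm
                hR'SD hR'pos hR'ne (by omega) (by omega) ?_ (ih _ hn2pos hrest)
              intro hjS ⟨hz1, hz2⟩
              cases rest with
              | nil => simp at hjS
              | cons S0 r' =>
                simp only [List.headD_cons] at hjS hz1 hz2 hSSD hSpos hptS hy
                obtain ⟨y', hy'mem, hvy'⟩ :=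
                  noz_IR hSSD hSpos hptS hjS rfl (le_refl _) hz1 hz2
                simp only [largestEjectableBetween, List.headD_cons] at hy
                rw [List.max?_eq_none_iff.1 hy] at hy'mem
                simp at hy'mem

end Aux13e
/-- Φ is well-defined: the output tableau is decreasing, of the same
shape if `α = 0`, and of the shape with one new removable cell added if `α = 1`. -/
theorem statement13 (P : List (List ℕ)) (m : ℕ)
    (hP : IsDecreasingTableau P) (hm : 0 < m) :
    IsDecreasingTableau (phi P m).1 ∧
    ((phi P m).2.2.2 = false → shape (phi P m).1 = shape P) ∧
    ((phi P m).2.2.2 = true →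
      IsRemovable (phi P m).1 (phi P m).2.1 (phi P m).2.2.1 ∧
      shape (phi P m).1 = shapePlus (shape P) (phi P m).2.1) := by
  exact phiRows_good P m hm hP
end

section
/- In an Indirect Replacement case 2 iteration of the forward insertion Φ, where N is inserted into P_{≥i} with n₁ the largest entry of row i at most N and n₂ the entry immediately to the right of n₁ (n₂ > 0): if there is an entry t₁ directly below n₁ in P, then t₁ ≤ n₂. -/
/-- in an Indirect Replacement case 2 iteration of Φ (inserting `N`
into the tableau `R :: rest`), any entry directly below `n₁` is at most `n₂`. -/
theorem statement14 (R : List ℕ) (rest : List (List ℕ)) (N n1 j n2 : ℕ)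
    (hT : IsDecreasingTableau (R :: rest))
    (hn1 : (R.filter fun y => decide (y ≤ N)).max? = some n1)
    (hj : j = R.idxOf n1) (hn2 : n2 = R.getD (j + 1) 0)
    (hD : ¬ (n1 = N ∧ N - 1 ∈ R))
    (hDR : ¬ (n1 < N ∧ ¬ Ejectable rest n1))
    (hy : ∀ y, Ejectable rest y → ¬ (n2 < y ∧ y < n1))
    (hn2pos : 0 < n2)
    (hbelow : j < (rest.headD []).length) :
    (rest.headD []).getD j 0 ≤ n2 := by
  obtain ⟨S, tail, rfl⟩ : ∃ S tail, rest = S :: tail := by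
    cases rest with
    | nil => simp at hbelow
    | cons S tail => exact ⟨S, tail, rfl⟩
  simp only [List.headD] at hbelow ⊢
  -- basic facts about n1 and j
  have hn1R : n1 ∈ R := by
    have hmem := List.max?_mem hn1
    exact (List.mem_filter.1 hmem).1
  have hjlt : j < R.length := hj ▸ List.idxOf_lt_length_iff.2 hn1R
  have hRj : R.getD j 0 = n1 := by
    rw [List.getD_eq_getElem _ _ hjlt]
    subst hj
    exact List.getElem_idxOf _
  -- column condition between R and S
  obtain ⟨⟨hlen, hcol⟩, -⟩ := List.isChain_cons_cons.1 hT.2.2.2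
  -- S is strictly decreasing
  have hSpw : S.Pairwise (fun x y => y < x) := by
    have hS := hT.2.2.1 S (by simp)
    exact List.isChain_iff_pairwise.1 hS
  set t1 := S.getD j 0 with ht1
  by_contra hcon
  push_neg at hcon
  have ht1S : t1 ∈ S := by
    rw [ht1, List.getD_eq_getElem _ _ hbelow]
    exact List.getElem_mem _
  have ht1lt : t1 < n1 := by
    have := hcol j hbelow
    rwa [hRj] at this
  -- t1 - 1 is not in S
  have hnotmem : t1 - 1 ∉ S := by
    intro hmem
    obtain ⟨k, hk, hSk⟩ := List.mem_iff_getElem.1 hmem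
    have hget := List.pairwise_iff_getElem.1 hSpw
    have ht1pos : 0 < t1 := lt_trans hn2pos hcon
    have ht1pred : t1 - 1 < t1 := Nat.sub_lt ht1pos one_pos
    have hSj : S[j] = t1 := by rw [ht1, List.getD_eq_getElem _ _ hbelow]
    have hjk : j < k := by
      rcases lt_trichotomy j k with h | h | h
      · exact h
      · exfalso; subst h; rw [hSj] at hSk; omega
      · exfalso
        have := hget k j hk hbelow h
        rw [hSk, hSj] at this
        omega
    have hj1 : j + 1 < S.length := lt_of_le_of_lt hjk hk
    have hS1 : S[j+1] < n2 := by
      have := hcol (j + 1) hj1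
      rw [List.getD_eq_getElem _ _ hj1] at this
      rw [hn2]
      exact this
    have hle : t1 - 1 ≤ S[j+1] := by
      rcases eq_or_lt_of_le (Nat.succ_le_of_lt hjk) with h | h
      · have heq : S[j+1] = S[k] := by subst h; rfl
        omega
      · have hlt := hget (j+1) k hj1 hk h
        omega
    omega
  have hej : Ejectable (S :: tail) t1 := ⟨ht1S, Or.inl hnotmem⟩
  exact hy t1 hej ⟨hcon, ht1lt⟩
end

section
/- Pieri property of forward insertion: let Φ(P, m) = (P', (r₁,c₁), α) and Φ(P', m') = (P'', (r₂,c₂), α'). If m' < m, then c₁ < c₂. -/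
namespace S16

/-- strictly decreasing list -/
def SDec (R : List ℕ) : Prop := R.Pairwise (fun x y => y < x)

lemma sdec_get {R : List ℕ} (h : SDec R) {i j : ℕ} (hi : i < R.length)
    (hj : j < R.length) (hij : i < j) : R[j] < R[i] := by
  rw [SDec, List.pairwise_iff_getElem] at h; exact h i j hi hj hij

lemma sdec_get_le {R : List ℕ} (h : SDec R) {i j : ℕ} (hi : i ≤ j)
    (hj : j < R.length) : R[j] ≤ R[i]'(lt_of_le_of_lt hi hj) := by
  rcases eq_or_lt_of_le hi with rfl | hi'
  · exact le_refl _
  · exact le_of_lt (sdec_get h _ hj hi')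

lemma length_replaceVal (R : List ℕ) (a b : ℕ) :
    (replaceVal R a b).length = R.length := by simp [replaceVal]

lemma getElem_replaceVal (R : List ℕ) (a b k : ℕ) (hk : k < R.length) :
    (replaceVal R a b)[k]'(by simpa [replaceVal] using hk)
      = if R[k] = a then b else R[k] := by
  simp [replaceVal]

lemma mem_replaceVal_new {R : List ℕ} {a : ℕ} (b : ℕ) (ha : a ∈ R) :
    b ∈ replaceVal R a b := by
  simp only [replaceVal, List.mem_map]
  exact ⟨a, ha, by simp⟩

/-- spec for max? of (filter ≤ N) -/
lemma maxle_some {R : List ℕ} {N n1 : ℕ}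
    (h : (R.filter fun y => decide (y ≤ N)).max? = some n1) :
    n1 ∈ R ∧ n1 ≤ N ∧ ∀ x ∈ R, x ≤ N → x ≤ n1 := by
  rw [List.max?_eq_some_iff'] at h
  obtain ⟨h1, h2⟩ := h
  rw [List.mem_filter] at h1
  refine ⟨h1.1, by simpa using h1.2, fun x hx hxN => h2 x ?_⟩
  rw [List.mem_filter]; exact ⟨hx, by simpa using hxN⟩

lemma maxle_none {R : List ℕ} {N : ℕ}
    (h : (R.filter fun y => decide (y ≤ N)).max? = none) :
    ∀ x ∈ R, N < x := by
  rw [List.max?_eq_none_iff] at h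
  intro x hx
  by_contra hc
  have : x ∈ R.filter fun y => decide (y ≤ N) := by
    rw [List.mem_filter]; exact ⟨hx, by simpa using le_of_not_gt hc⟩
  simp [h] at this

lemma leb_some {rest : List (List ℕ)} {lo hi y : ℕ}
    (h : largestEjectableBetween rest lo hi = some y) :
    y ∈ rest.headD [] ∧ ejectableB rest y = true ∧ lo < y ∧ y < hi := by
  rw [largestEjectableBetween, List.max?_eq_some_iff'] at h
  have h1 := h.1
  rw [List.mem_filter] at h1
  refine ⟨h1.1, ?_⟩
  have := h1.2
  simp only [Bool.and_eq_true, decide_eq_true_eq] at this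
  exact ⟨this.1.1, this.1.2, this.2⟩

lemma leb_none {rest : List (List ℕ)} {lo hi : ℕ}
    (h : largestEjectableBetween rest lo hi = none) :
    ∀ x ∈ rest.headD [], ejectableB rest x = true → lo < x → x < hi → False := by
  rw [largestEjectableBetween, List.max?_eq_none_iff] at h
  intro x hx he hlo hhi
  have : x ∈ (rest.headD []).filter fun x => ejectableB rest x && decide (lo < x) && decide (x < hi) :=
    List.mem_filter.2 ⟨hx, by simp [he, hlo, hhi]⟩
  rw [h] at this
  exact absurd this List.not_mem_nil

/-! equation lemmas for phiRows -/

lemma phiRows_nil (N : ℕ) : phiRows N [] = ([[N]], 1, 1, true) := rfl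

lemma phiRows_cons_none {N : ℕ} {R : List ℕ} (rest : List (List ℕ))
    (h : (R.filter fun y => decide (y ≤ N)).max? = none) :
    phiRows N (R :: rest) = ((R ++ [N]) :: rest, 1, R.length + 1, true) := by
  simp only [phiRows, h]

lemma phiRows_cons_dummy {N n1 : ℕ} {R : List ℕ} (rest : List (List ℕ))
    (h : (R.filter fun y => decide (y ≤ N)).max? = some n1)
    (h1 : n1 = N) (h2 : N - 1 ∈ R) :
    phiRows N (R :: rest) = (replaceVal R n1 N :: (phiRows (N - 1) rest).1,
      (phiRows (N - 1) rest).2.1 + 1, (phiRows (N - 1) rest).2.2.1,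
      (phiRows (N - 1) rest).2.2.2) := by
  have hb : (decide (n1 = N) && R.contains (N - 1)) = true := by simp [h1, h2]
  simp only [phiRows, h, hb, if_true]

lemma phiRows_cons_direct {N n1 : ℕ} {R : List ℕ} (rest : List (List ℕ))
    (h : (R.filter fun y => decide (y ≤ N)).max? = some n1)
    (h1 : ¬(n1 = N ∧ N - 1 ∈ R)) (h2 : n1 < N) (h3 : ejectableB rest n1 = false) :
    phiRows N (R :: rest) = (replaceVal R n1 N :: (phiRows n1 rest).1,
      (phiRows n1 rest).2.1 + 1, (phiRows n1 rest).2.2.1,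
      (phiRows n1 rest).2.2.2) := by
  have hb : (decide (n1 = N) && R.contains (N - 1)) = false := by
    rcases Decidable.em (n1 = N) with he | he
    · have : ¬ (N - 1 ∈ R) := fun hh => h1 ⟨he, hh⟩
      simp [he, this]
    · simp [he]
  have hb2 : (decide (n1 < N) && !(ejectableB rest n1)) = true := by simp [h2, h3]
  simp only [phiRows, h, hb, hb2, Bool.false_eq_true, if_false, if_true]

lemma phiRows_cons_ir1 {N n1 y : ℕ} {R : List ℕ} (rest : List (List ℕ))
    (h : (R.filter fun y => decide (y ≤ N)).max? = some n1)
    (h1 : ¬(n1 = N ∧ N - 1 ∈ R)) (h2 : ¬(n1 < N ∧ ejectableB rest n1 = false))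
    (h3 : largestEjectableBetween rest (R.getD (R.idxOf n1 + 1) 0) n1 = some y) :
    phiRows N (R :: rest) = (replaceVal R n1 N :: (phiRows y rest).1,
      (phiRows y rest).2.1 + 1, (phiRows y rest).2.2.1, (phiRows y rest).2.2.2) := by
  have hb : (decide (n1 = N) && R.contains (N - 1)) = false := by
    rcases Decidable.em (n1 = N) with he | he
    · have : ¬ (N - 1 ∈ R) := fun hh => h1 ⟨he, hh⟩
      simp [he, this]
    · simp [he]
  have hb2 : (decide (n1 < N) && !(ejectableB rest n1)) = false := by
    rcases Decidable.em (n1 < N) with he | he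
    · have : ejectableB rest n1 = true := by
        rcases Bool.eq_false_or_eq_true (ejectableB rest n1) with ht | hf
        · exact ht
        · exact absurd ⟨he, hf⟩ h2
      simp [this]
    · simp [he]
  simp only [phiRows, h, hb, hb2, Bool.false_eq_true, if_false, h3]

lemma phiRows_cons_t2 {N n1 : ℕ} {R : List ℕ} (rest : List (List ℕ))
    (h : (R.filter fun y => decide (y ≤ N)).max? = some n1)
    (h1 : ¬(n1 = N ∧ N - 1 ∈ R)) (h2 : ¬(n1 < N ∧ ejectableB rest n1 = false))
    (h3 : largestEjectableBetween rest (R.getD (R.idxOf n1 + 1) 0) n1 = none)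
    (h4 : R.getD (R.idxOf n1 + 1) 0 = 0) :
    phiRows N (R :: rest) = (replaceVal R n1 N :: rest, 1, R.idxOf n1 + 1, false) := by
  have hb : (decide (n1 = N) && R.contains (N - 1)) = false := by
    rcases Decidable.em (n1 = N) with he | he
    · have : ¬ (N - 1 ∈ R) := fun hh => h1 ⟨he, hh⟩
      simp [he, this]
    · simp [he]
  have hb2 : (decide (n1 < N) && !(ejectableB rest n1)) = false := by
    rcases Decidable.em (n1 < N) with he | he
    · have : ejectableB rest n1 = true := by
        rcases Bool.eq_false_or_eq_true (ejectableB rest n1) with ht | hf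
        · exact ht
        · exact absurd ⟨he, hf⟩ h2
      simp [this]
    · simp [he]
  simp only [phiRows, h, hb, hb2, Bool.false_eq_true, if_false, h3]
  rw [if_pos h4]

lemma phiRows_cons_ir2 {N n1 : ℕ} {R : List ℕ} (rest : List (List ℕ))
    (h : (R.filter fun y => decide (y ≤ N)).max? = some n1)
    (h1 : ¬(n1 = N ∧ N - 1 ∈ R)) (h2 : ¬(n1 < N ∧ ejectableB rest n1 = false))
    (h3 : largestEjectableBetween rest (R.getD (R.idxOf n1 + 1) 0) n1 = none)
    (h4 : R.getD (R.idxOf n1 + 1) 0 ≠ 0) :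
    phiRows N (R :: rest) = (replaceVal R n1 N :: (phiRows (R.getD (R.idxOf n1 + 1) 0) rest).1,
      (phiRows (R.getD (R.idxOf n1 + 1) 0) rest).2.1 + 1,
      (phiRows (R.getD (R.idxOf n1 + 1) 0) rest).2.2.1,
      (phiRows (R.getD (R.idxOf n1 + 1) 0) rest).2.2.2) := by
  have hb : (decide (n1 = N) && R.contains (N - 1)) = false := by
    rcases Decidable.em (n1 = N) with he | he
    · have : ¬ (N - 1 ∈ R) := fun hh => h1 ⟨he, hh⟩
      simp [he, this]
    · simp [he]
  have hb2 : (decide (n1 < N) && !(ejectableB rest n1)) = false := by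
    rcases Decidable.em (n1 < N) with he | he
    · have : ejectableB rest n1 = true := by
        rcases Bool.eq_false_or_eq_true (ejectableB rest n1) with ht | hf
        · exact ht
        · exact absurd ⟨he, hf⟩ h2
      simp [this]
    · simp [he]
  simp only [phiRows, h, hb, hb2, Bool.false_eq_true, if_false, h3]
  rw [if_neg h4]


lemma dt_tail {R : List ℕ} {rest : List (List ℕ)}
    (h : IsDecreasingTableau (R :: rest)) : IsDecreasingTableau rest :=
  ⟨fun S hS => h.1 S (List.mem_cons_of_mem _ hS),
   fun S hS => h.2.1 S (List.mem_cons_of_mem _ hS),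
   fun S hS => h.2.2.1 S (List.mem_cons_of_mem _ hS),
   h.2.2.2.tail⟩

lemma dt_sdec {R : List ℕ} {rest : List (List ℕ)}
    (h : IsDecreasingTableau (R :: rest)) : SDec R := by
  have := h.2.2.1 R (List.mem_cons_self)
  exact List.isChain_iff_pairwise.mp this

lemma dt_pos {R : List ℕ} {rest : List (List ℕ)}
    (h : IsDecreasingTableau (R :: rest)) : ∀ x ∈ R, 0 < x :=
  h.2.1 R (List.mem_cons_self)

lemma dt_two {R S : List ℕ} {rest₂ : List (List ℕ)}
    (h : IsDecreasingTableau (R :: S :: rest₂)) :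
    S.length ≤ R.length ∧ ∀ k < S.length, S.getD k 0 < R.getD k 0 :=
  (List.isChain_cons_cons.1 h.2.2.2).1

lemma not_mem_replaceVal_pred {S : List ℕ} {n1 v : ℕ} (hv : 0 < v) (hn1 : n1 ≤ v)
    (hmaxp : ∀ x ∈ S, x ≤ v → x ≤ n1) (hnd : ¬(n1 = v ∧ v - 1 ∈ S)) :
    (v - 1) ∉ replaceVal S n1 v := by
  intro hm
  rw [replaceVal, List.mem_map] at hm
  obtain ⟨y, hy, hyy⟩ := hm
  by_cases hya : y = n1
  · rw [if_pos hya] at hyy; omega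
  · rw [if_neg hya] at hyy
    subst hyy
    have h1 : v - 1 ≤ n1 := hmaxp _ hy (by omega)
    rcases eq_or_lt_of_le hn1 with he | hl
    · exact hnd ⟨he, hy⟩
    · omega

/-- after inserting `v`, `v` is ejectable in the result -/
lemma ej_phi : ∀ (U : List (List ℕ)), (∀ S ∈ U, ∀ x ∈ S, 0 < x) → ∀ v, 0 < v →
    ejectableB (phiRows v U).1 v = true := by
  intro U
  induction U with
  | nil =>
    intro _ v hv
    rw [phiRows_nil]
    have : v - 1 ∉ [v] := by simp; omega
    simp [ejectableB, this]
  | cons S rest IH =>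
    intro hpos v hv
    rcases hmax : (S.filter fun y => decide (y ≤ v)).max? with _ | n1
    · rw [phiRows_cons_none rest hmax]
      have hall := maxle_none hmax
      have h1 : v ∈ S ++ [v] := by simp
      have h2 : v - 1 ∉ S ++ [v] := by
        simp only [List.mem_append, List.mem_singleton]
        rintro (hh | hh)
        · exact absurd (hall _ hh) (by omega)
        · omega
      simp [ejectableB, h1, h2]
    · obtain ⟨hmem, hle, hmaxp⟩ := maxle_some hmax
      by_cases hdum : n1 = v ∧ v - 1 ∈ S
      · rw [phiRows_cons_dummy rest hmax hdum.1 hdum.2]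
        have hv1pos : 0 < v - 1 := hpos S (by simp) _ hdum.2
        have hrec := IH (fun S' hS' => hpos S' (by simp [hS'])) (v - 1) hv1pos
        have hm1 : v ∈ replaceVal S n1 v := mem_replaceVal_new v hmem
        have hm2 : v - 1 ∈ replaceVal S n1 v := by
          rw [replaceVal, List.mem_map]
          refine ⟨v - 1, hdum.2, by rw [if_neg (by rw [hdum.1]; omega)]⟩
        simp [ejectableB, hm1, hm2, hrec]
      · have hm1 : v ∈ replaceVal S n1 v := mem_replaceVal_new v hmem
        have hm2 := not_mem_replaceVal_pred hv hle hmaxp hdum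
        by_cases hdir : n1 < v ∧ ejectableB rest n1 = false
        · rw [phiRows_cons_direct rest hmax hdum hdir.1 hdir.2]
          simp [ejectableB, hm1, hm2]
        · rcases hleb : largestEjectableBetween rest (S.getD (S.idxOf n1 + 1) 0) n1 with _ | y
          · by_cases hn2 : S.getD (S.idxOf n1 + 1) 0 = 0
            · rw [phiRows_cons_t2 rest hmax hdum hdir hleb hn2]
              simp [ejectableB, hm1, hm2]
            · rw [phiRows_cons_ir2 rest hmax hdum hdir hleb hn2]
              simp [ejectableB, hm1, hm2]
          · rw [phiRows_cons_ir1 rest hmax hdum hdir hleb]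
            simp [ejectableB, hm1, hm2]


/-- One-row analysis of forward insertion. -/
lemma firstRow {R : List ℕ} (rest : List (List ℕ)) {N n1 : ℕ}
    (hpos : ∀ x ∈ R, 0 < x) (hsd : SDec R)
    (hmax : (R.filter fun y => decide (y ≤ N)).max? = some n1) :
    (R.getD (R.idxOf n1 + 1) 0 = 0 ∧
      phiRows N (R :: rest) = (replaceVal R n1 N :: rest, 1, R.idxOf n1 + 1, false)) ∨
    ∃ v, 0 < v ∧ R.getD (R.idxOf n1 + 1) 0 ≤ v ∧ v ≤ n1 ∧
      (v = n1 → ejectableB rest n1 = false) ∧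
      (n1 ≤ v + 1 ∨ (R.getD (R.idxOf n1 + 1) 0 < v ∧ v ∈ rest.headD []) ∨
        (v = R.getD (R.idxOf n1 + 1) 0 ∧
          largestEjectableBetween rest (R.getD (R.idxOf n1 + 1) 0) n1 = none)) ∧
      (phiRows N (R :: rest)).1 = replaceVal R n1 N :: (phiRows v rest).1 ∧
      (phiRows N (R :: rest)).2.2.1 = (phiRows v rest).2.2.1 := by
  obtain ⟨hmem, hle, hmaxp⟩ := maxle_some hmax
  have hjlt : R.idxOf n1 < R.length := List.idxOf_lt_length_iff.2 hmem
  have hRj : R[R.idxOf n1] = n1 := List.getElem_idxOf hjlt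
  have hn1pos : 0 < n1 := hpos _ hmem
  have hn2lt : R.getD (R.idxOf n1 + 1) 0 < n1 := by
    by_cases hr : R.idxOf n1 + 1 < R.length
    · rw [List.getD_eq_getElem _ _ hr]
      have := sdec_get hsd hjlt hr (by omega)
      omega
    · rw [List.getD_eq_default _ _ (by omega)]; exact hn1pos
  by_cases hdum : n1 = N ∧ N - 1 ∈ R
  · right
    refine ⟨N - 1, hpos _ hdum.2, by omega, by omega,
      fun hvn1 => absurd hvn1 (by omega), Or.inl (by omega), ?_, ?_⟩ <;>
      rw [phiRows_cons_dummy rest hmax hdum.1 hdum.2]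
  · by_cases hdir : n1 < N ∧ ejectableB rest n1 = false
    · right
      refine ⟨n1, hn1pos, by omega, le_refl _, fun _ => hdir.2, Or.inl (by omega), ?_, ?_⟩ <;>
        rw [phiRows_cons_direct rest hmax hdum hdir.1 hdir.2]
    · rcases hleb : largestEjectableBetween rest (R.getD (R.idxOf n1 + 1) 0) n1 with _ | y
      · by_cases hn2 : R.getD (R.idxOf n1 + 1) 0 = 0
        · exact Or.inl ⟨hn2, phiRows_cons_t2 rest hmax hdum hdir hleb hn2⟩
        · right
          refine ⟨R.getD (R.idxOf n1 + 1) 0, by omega, le_refl _, by omega,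
            fun hvn1 => absurd hvn1 (by omega), Or.inr (Or.inr ⟨rfl, rfl⟩), ?_, ?_⟩ <;>
            rw [phiRows_cons_ir2 rest hmax hdum hdir hleb hn2]
      · obtain ⟨hy1, hy2, hy3, hy4⟩ := leb_some hleb
        right
        refine ⟨y, by omega, by omega, by omega, fun hvn1 => absurd hvn1 (by omega),
          Or.inr (Or.inl ⟨hy3, hy1⟩), ?_, ?_⟩ <;>
          rw [phiRows_cons_ir1 rest hmax hdum hdir hleb]

/-- key geometric claim: under STAR, the entry of the next row below the bump
position is at most the passed value. -/
lemma claimStar {R S : List ℕ} {rest₂ : List (List ℕ)} {N n1 v : ℕ}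
    (hT : IsDecreasingTableau (R :: S :: rest₂))
    (hmax : (R.filter fun y => decide (y ≤ N)).max? = some n1)
    (hstar : n1 ≤ v + 1 ∨ (R.getD (R.idxOf n1 + 1) 0 < v ∧ v ∈ S) ∨
      (v = R.getD (R.idxOf n1 + 1) 0 ∧
        largestEjectableBetween (S :: rest₂) (R.getD (R.idxOf n1 + 1) 0) n1 = none))
    (hjS : R.idxOf n1 < S.length) : S[R.idxOf n1] ≤ v := by
  obtain ⟨hmem, hle, hmaxp⟩ := maxle_some hmax
  have hjlt : R.idxOf n1 < R.length := List.idxOf_lt_length_iff.2 hmem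
  have hRj : R[R.idxOf n1] = n1 := List.getElem_idxOf hjlt
  have hcol := (dt_two hT).2
  have hSsd : SDec S := dt_sdec (dt_tail hT)
  have hz' := hcol _ hjS
  rw [List.getD_eq_getElem _ _ hjS, List.getD_eq_getElem _ _ hjlt, hRj] at hz'
  -- hz' : S[j] < n1
  rcases hstar with h1 | ⟨h2a, h2b⟩ | ⟨h3a, h3b⟩
  · omega
  · by_contra hc
    push_neg at hc
    have hpS : S.idxOf v < S.length := List.idxOf_lt_length_iff.2 h2b
    have hSp : S[S.idxOf v] = v := List.getElem_idxOf hpS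
    have hgt : R.idxOf n1 < S.idxOf v := by
      by_contra hle2
      push_neg at hle2
      have := sdec_get_le hSsd hle2 hjS
      omega
    have hj1 : R.idxOf n1 + 1 < S.length := by omega
    have hv1 : v ≤ S[R.idxOf n1 + 1] := by
      have := sdec_get_le hSsd (show R.idxOf n1 + 1 ≤ S.idxOf v by omega) hpS
      omega
    have hv2 := hcol _ hj1
    rw [List.getD_eq_getElem _ _ hj1] at hv2
    omega
  · by_contra hc
    push_neg at hc
    -- z := S[j] with n2 < z < n1
    have hzS : S[R.idxOf n1] ∈ S := List.getElem_mem _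
    have hejf : ejectableB (S :: rest₂) S[R.idxOf n1] = false := by
      rcases Bool.eq_false_or_eq_true (ejectableB (S :: rest₂) S[R.idxOf n1]) with ht | hf
      · exact absurd (leb_none h3b _ hzS ht (by omega) (by omega)) not_false
      · exact hf
    have hcz : S.contains S[R.idxOf n1] = true := by
      simp [hzS]
    have h5 : S.contains (S[R.idxOf n1] - 1) = true := by
      rcases Bool.eq_false_or_eq_true (S.contains (S[R.idxOf n1] - 1)) with ht | hf
      · exact ht
      · rw [show ejectableB (S :: rest₂) S[R.idxOf n1]
            = (S.contains S[R.idxOf n1] &&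
              (!(S.contains (S[R.idxOf n1] - 1)) || ejectableB rest₂ (S[R.idxOf n1] - 1)))
            from rfl, hcz, hf] at hejf
        simp at hejf
    have hz1S : S[R.idxOf n1] - 1 ∈ S := by simpa using h5
    have hq : S.idxOf (S[R.idxOf n1] - 1) < S.length := List.idxOf_lt_length_iff.2 hz1S
    have hSq : S[S.idxOf (S[R.idxOf n1] - 1)] = S[R.idxOf n1] - 1 :=
      List.getElem_idxOf hq
    have hgt : R.idxOf n1 < S.idxOf (S[R.idxOf n1] - 1) := by
      by_contra hle2
      push_neg at hle2
      have := sdec_get_le hSsd hle2 hjS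
      omega
    have hj1 : R.idxOf n1 + 1 < S.length := by omega
    have hv1 : S[R.idxOf n1] - 1 ≤ S[R.idxOf n1 + 1] := by
      have := sdec_get_le hSsd
        (show R.idxOf n1 + 1 ≤ S.idxOf (S[R.idxOf n1] - 1) by omega) hq
      omega
    have hv2 := hcol _ hj1
    rw [List.getD_eq_getElem _ _ hj1] at hv2
    omega


lemma stepBound {R : List ℕ} {rest : List (List ℕ)} {N n1 v : ℕ}
    (hT : IsDecreasingTableau (R :: rest))
    (hmax : (R.filter fun y => decide (y ≤ N)).max? = some n1)
    (hstar : n1 ≤ v + 1 ∨ (R.getD (R.idxOf n1 + 1) 0 < v ∧ v ∈ rest.headD []) ∨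
      (v = R.getD (R.idxOf n1 + 1) 0 ∧
        largestEjectableBetween rest (R.getD (R.idxOf n1 + 1) 0) n1 = none))
    (HP : ∀ N' n1', ((rest.headD []).filter fun y => decide (y ≤ N')).max? = some n1' →
      (phiRows N' rest).2.2.1 ≤ (rest.headD []).idxOf n1' + 1) :
    (phiRows v rest).2.2.1 ≤ R.idxOf n1 + 1 := by
  rcases rest with _ | ⟨S, rest₂⟩
  · rw [phiRows_nil]
    show (1 : ℕ) ≤ R.idxOf n1 + 1
    omega
  · simp only [List.headD_cons] at hstar HP
    rcases hm2 : (S.filter fun y => decide (y ≤ v)).max? with _ | n1''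
    · rw [phiRows_cons_none rest₂ hm2]
      show S.length + 1 ≤ R.idxOf n1 + 1
      have hall := maxle_none hm2
      by_contra hc
      push_neg at hc
      have hjS : R.idxOf n1 < S.length := by omega
      have := claimStar hT hmax hstar hjS
      exact absurd this (by have := hall _ (List.getElem_mem hjS); omega)
    · obtain ⟨hmem'', hle'', hmaxp''⟩ := maxle_some hm2
      have h1 := HP v n1'' hm2
      have hp : S.idxOf n1'' < S.length := List.idxOf_lt_length_iff.2 hmem''
      have hSp : S[S.idxOf n1''] = n1'' := List.getElem_idxOf hp
      have hple : S.idxOf n1'' ≤ R.idxOf n1 := by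
        by_contra hcc
        push_neg at hcc
        have hjS : R.idxOf n1 < S.length := by omega
        have hstar' := claimStar hT hmax hstar hjS
        have h2 : S[R.idxOf n1] ≤ n1'' := hmaxp'' _ (List.getElem_mem hjS) hstar'
        have h3 := sdec_get (dt_sdec (dt_tail hT)) hjS hp hcc
        omega
      omega

lemma path : ∀ (T : List (List ℕ)), IsDecreasingTableau T → ∀ N n1,
    ((T.headD []).filter fun y => decide (y ≤ N)).max? = some n1 →
    (phiRows N T).2.2.1 ≤ (T.headD []).idxOf n1 + 1 := by
  intro T
  induction T with
  | nil => intro _ N n1 h; simp at h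
  | cons R rest IH =>
    intro hT N n1 hmax
    simp only [List.headD_cons] at hmax ⊢
    rcases firstRow rest (dt_pos hT) (dt_sdec hT) hmax with ⟨hn2, heq⟩ |
      ⟨v, hv0, hvn2, hvn1, hvej, hstar, h1, hcol⟩
    · rw [heq]
    · rw [hcol]
      exact stepBound hT hmax hstar (fun N' n1' h => IH (dt_tail hT) N' n1' h)

lemma mainLemma : ∀ (T : List (List ℕ)), IsDecreasingTableau T → ∀ N N', 0 < N' → N' < N →
    (phiRows N T).2.2.1 < (phiRows N' (phiRows N T).1).2.2.1 := by
  intro T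
  induction T with
  | nil =>
    intro _ N N' h0 hlt
    rw [phiRows_nil]
    have he : (([N] : List ℕ).filter fun y => decide (y ≤ N')).max? = none := by
      rw [List.max?_eq_none_iff, List.filter_eq_nil_iff]
      intro x hx
      simp only [List.mem_singleton] at hx
      subst hx
      simp only [decide_eq_true_eq]
      omega
    show (1 : ℕ) < (phiRows N' [[N]]).2.2.1
    rw [phiRows_cons_none [] he]
    show (1 : ℕ) < ([N] : List ℕ).length + 1
    simp
  | cons R rest IH =>
    intro hT N N' h0 hlt
    rcases hmax : (R.filter fun y => decide (y ≤ N)).max? with _ | n1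
    · rw [phiRows_cons_none rest hmax]
      have hall := maxle_none hmax
      have he2 : (((R ++ [N]).filter fun y => decide (y ≤ N')).max?) = none := by
        rw [List.max?_eq_none_iff, List.filter_eq_nil_iff]
        intro x hx
        simp only [List.mem_append, List.mem_singleton] at hx
        simp only [decide_eq_true_eq]
        rcases hx with hx | rfl
        · have := hall x hx; omega
        · omega
      show R.length + 1 < (phiRows N' ((R ++ [N]) :: rest)).2.2.1
      rw [phiRows_cons_none rest he2]
      show R.length + 1 < (R ++ [N]).length + 1
      simp
    · obtain ⟨hmem, hle, hmaxp⟩ := maxle_some hmax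
      have hsd := dt_sdec hT
      have hpos := dt_pos hT
      have hjlt : R.idxOf n1 < R.length := List.idxOf_lt_length_iff.2 hmem
      have hRj : R[R.idxOf n1] = n1 := List.getElem_idxOf hjlt
      have hbefore : ∀ k, k < R.idxOf n1 → ∀ (hk : k < R.length), N < R[k] := by
        intro k hkj hk
        have h1 : n1 < R[k] := hRj ▸ sdec_get hsd hk hjlt hkj
        by_contra hc
        have := hmaxp _ (List.getElem_mem hk) (le_of_not_gt hc)
        omega
      have hlen' : (replaceVal R n1 N).length = R.length := length_replaceVal R n1 N
      have hget' : ∀ k (hk : k < R.length),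
          (replaceVal R n1 N)[k]'(by omega) = if k = R.idxOf n1 then N else R[k] := by
        intro k hk
        rw [getElem_replaceVal R n1 N k hk]
        by_cases hkj : k = R.idxOf n1
        · subst hkj
          rw [if_pos hRj, if_pos rfl]
        · rw [if_neg hkj, if_neg ?_]
          intro hc
          rcases lt_or_gt_of_ne hkj with h | h
          · have := sdec_get hsd hk hjlt h; omega
          · have := sdec_get hsd hjlt hk h; omega
      have hprefix : ∀ k (hk : k < R.length), k ≤ R.idxOf n1 →
          N' < (replaceVal R n1 N)[k]'(by omega) := by
        intro k hk hkj
        rw [hget' k hk]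
        rcases eq_or_lt_of_le hkj with rfl | h
        · rw [if_pos rfl]; omega
        · rw [if_neg (by omega)]
          have := hbefore k h hk; omega
      rcases firstRow rest hpos hsd hmax with ⟨hn2, heq⟩ |
        ⟨v₁, hv0, hvn2, hvn1, hvej, hstar, h1, hcol1⟩
      · -- first insertion terminates here (T2)
        have hj1 : R.idxOf n1 + 1 = R.length := by
          by_contra hc
          have hlt2 : R.idxOf n1 + 1 < R.length := by omega
          rw [List.getD_eq_getElem _ _ hlt2] at hn2
          have := hpos _ (List.getElem_mem hlt2); omega
        rw [heq]
        show R.idxOf n1 + 1 < (phiRows N' (replaceVal R n1 N :: rest)).2.2.1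
        have hm2 : ((replaceVal R n1 N).filter fun y => decide (y ≤ N')).max? = none := by
          rw [List.max?_eq_none_iff, List.filter_eq_nil_iff]
          intro x hx
          rw [List.mem_iff_getElem] at hx
          obtain ⟨k, hk, rfl⟩ := hx
          have hk' : k < R.length := by omega
          have := hprefix k hk' (by omega)
          simp only [decide_eq_true_eq]
          omega
        rw [phiRows_cons_none rest hm2]
        show R.idxOf n1 + 1 < (replaceVal R n1 N).length + 1
        omega
      · -- first insertion continues with value v₁
        have hcolbound : (phiRows v₁ rest).2.2.1 ≤ R.idxOf n1 + 1 :=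
          stepBound hT hmax hstar (fun N'' n1'' h => path rest (dt_tail hT) N'' n1'' h)
        rcases hmax2 : ((replaceVal R n1 N).filter fun y => decide (y ≤ N')).max? with _ | n1'
        · -- second appends at this row
          rw [hcol1, h1, phiRows_cons_none _ hmax2]
          show (phiRows v₁ rest).2.2.1 < (replaceVal R n1 N).length + 1
          omega
        · have hsd' : SDec (replaceVal R n1 N) := by
            rw [SDec, List.pairwise_iff_getElem]
            intro i k hi hk hik
            rw [hget' i (by omega), hget' k (by omega)]
            by_cases hkj : k = R.idxOf n1
            · rw [if_pos hkj, if_neg (by omega)]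
              have := hbefore i (by omega) (by omega)
              omega
            · rw [if_neg hkj]
              by_cases hij : i = R.idxOf n1
              · rw [if_pos hij]
                have := sdec_get hsd (show R.idxOf n1 < R.length by omega)
                  (by omega : k < R.length) (by omega)
                omega
              · rw [if_neg hij]
                exact sdec_get hsd (by omega) (by omega) hik
          have hpos' : ∀ x ∈ replaceVal R n1 N, 0 < x := by
            intro x hx
            rw [replaceVal, List.mem_map] at hx
            obtain ⟨y, hy, hyy⟩ := hx
            by_cases hya : y = n1
            · rw [if_pos hya] at hyy; omega
            · rw [if_neg hya] at hyy; subst hyy; exact hpos _ hy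
          obtain ⟨hmem', hle', hmaxp'⟩ := maxle_some hmax2
          have hjlt' : (replaceVal R n1 N).idxOf n1' < (replaceVal R n1 N).length :=
            List.idxOf_lt_length_iff.2 hmem'
          have hRj' : (replaceVal R n1 N)[(replaceVal R n1 N).idxOf n1'] = n1' :=
            List.getElem_idxOf hjlt'
          have hjj : R.idxOf n1 < (replaceVal R n1 N).idxOf n1' := by
            by_contra hc
            push_neg at hc
            have := hprefix _ (by omega) hc
            rw [hRj'] at this; omega
          have hn1'n2 : n1' ≤ R.getD (R.idxOf n1 + 1) 0 := by
            have h5 : R.idxOf n1 + 1 < R.length := by omega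
            rw [List.getD_eq_getElem _ _ h5]
            have h6 := sdec_get_le hsd'
              (show R.idxOf n1 + 1 ≤ (replaceVal R n1 N).idxOf n1' by omega) hjlt'
            rw [hRj'] at h6
            rw [hget' (R.idxOf n1 + 1) h5, if_neg (by omega)] at h6
            exact h6
          rcases firstRow (phiRows v₁ rest).1 hpos' hsd' hmax2 with ⟨hn2', heq'⟩ |
            ⟨v₂, hv0', hvn2', hvn1', hvej', hstar', h1', hcol2⟩
          · -- second terminates at this row (T2), strictly to the right
            rw [hcol1, h1, heq']
            show (phiRows v₁ rest).2.2.1 < (replaceVal R n1 N).idxOf n1' + 1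
            omega
          · -- both continue: compare recursive insertions
            rw [hcol1, h1, hcol2]
            have hv2v1 : v₂ < v₁ := by
              rcases eq_or_lt_of_le hvn1' with he | hlt2
              · rcases eq_or_lt_of_le hn1'n2 with he2 | hlt3
                · rcases eq_or_lt_of_le hvn2 with he3 | hlt4
                  · exfalso
                    have hejf := hvej' (by omega)
                    have hejt := ej_phi rest (dt_tail hT).2.1 v₁ hv0
                    have hne : n1' = v₁ := by omega
                    rw [hne] at hejf
                    rw [hejt] at hejf
                    exact absurd hejf (by simp)
                  · omega
                · omega
              · omega
            exact IH (dt_tail hT) v₁ v₂ hv0' hv2v1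

end S16

/-- Pieri property of forward insertion: inserting `m` then `m' < m`
gives termination columns `c₁ < c₂`. -/
theorem statement16 (P : List (List ℕ)) (m m' : ℕ)
    (hP : IsDecreasingTableau P) (hm : 0 < m) (hm' : 0 < m')
    (h : m' < m) :
    (phi P m).2.2.1 < (phi (phi P m).1 m').2.2.1 :=
  S16.mainLemma P hP m m' hm' h
end
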